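/- arXiv:1111.3690 — 6 statements merged into one kernel-verified Lean document; each statement's English description precedes it below -/
import Mathlib

section
/- Let P be an n-voter profile of linear orders over a finite candidate set X, let x* ∈ X, and let k ≥ 1. Then x* is a possible cowinner for plurality with respect to the addition of k new candidates (i.e., there exists an extension P' of P to X together with k new candidates such that no candidate's plurality score in P' exceeds that of x*) if and only if k · ntop(P, x*) ≥ Σ_{x ∈ X} max(0, ntop(P, x) − ntop(P, x*)), where ntop(P, x) denotes the number of votes in P ranking x first. -/
namespace PcWNC

abbrev Profile := List (List ℕ)

/-- `v` is a linear-order vote over the candidate set `X`: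
a duplicate-free list whose members are exactly the elements of `X`. -/
def IsVote (X : Finset ℕ) (v : List ℕ) : Prop := v.Nodup ∧ ∀ c, c ∈ v ↔ c ∈ X

/-- `P` is a profile over `X`: every vote is a linear order on `X`. -/
def IsProfile (X : Finset ℕ) (P : Profile) : Prop := ∀ v ∈ P, IsVote X v

/-- Restriction of a profile: delete from each vote the candidates outside `X`. -/
def restrict (X : Finset ℕ) (P : Profile) : Profile :=
  P.map (fun v => v.filter (fun c => decide (c ∈ X)))

/-- `P'` extends `P` (w.r.t. the initial candidate set `X`). -/
def Extends (X : Finset ℕ) (P' P : Profile) : Prop := restrict X P' = P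

/-- Plurality score: number of votes ranking `x` first. -/
def ntop (P : Profile) (x : ℕ) : ℕ := P.countP (fun v => decide (v.head? = some x))

/-- `K`-approval score: number of votes ranking `x` within the top `K` positions. -/
def approval (K : ℕ) (P : Profile) (x : ℕ) : ℕ :=
  P.countP (fun v => decide (x ∈ v.take K))

/-- Number of votes ranking `x` exactly in (1-indexed) position `i`. -/
def nPos (P : Profile) (i : ℕ) (x : ℕ) : ℕ :=
  P.countP (fun v => decide (x ∈ v ∧ v.idxOf x + 1 = i))

/-- Borda score of `x`: total number of candidates ranked below `x` over all votes. -/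
def borda (P : Profile) (x : ℕ) : ℕ :=
  (P.map (fun v => v.countP (fun w => decide (v.idxOf x < v.idxOf w)))).sum

/-- Number of votes ranking `x` above `z`. -/
def nAbove (P : Profile) (x z : ℕ) : ℕ :=
  P.countP (fun v => decide (x ∈ v ∧ z ∈ v ∧ v.idxOf x < v.idxOf z))

/-- Score of `x` under the positional scoring vector `s` (position `i` counted from 0). -/
def score (s : ℕ → ℤ) (P : Profile) (x : ℕ) : ℤ :=
  (P.map (fun v => s (v.idxOf x))).sum

/-- Insert the candidates of `ys` immediately below `x` in the vote `v`. -/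
def insertBelow (x : ℕ) (ys : List ℕ) (v : List ℕ) : List ℕ :=
  v.takeWhile (fun c => decide (c ≠ x)) ++ x :: ys ++
    (v.dropWhile (fun c => decide (c ≠ x))).drop 1

/-- Insert the candidates of `ys` immediately below `x` in every vote of `P`. -/
def insertProfile (x : ℕ) (ys : List ℕ) (P : Profile) : Profile :=
  P.map (insertBelow x ys)

/-- Veto score: number of votes not ranking `x` last. -/
def vetoScore (P : Profile) (x : ℕ) : ℕ :=
  P.countP (fun v => decide (v.getLast? ≠ some x))

/-! ### Auxiliary lemmas -/

lemma ntop_cons (v : List ℕ) (P : Profile) (x : ℕ) :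
    ntop (v :: P) x = (if v.head? = some x then 1 else 0) + ntop P x := by
  simp [ntop, List.countP_cons]; split <;> omega

/-- The construction for the backward direction: process the profile, keeping a vote
(with the new candidates appended at the bottom) as long as its top candidate has been
kept fewer than `s` times, and otherwise putting a new candidate on top; the demoted vote
number `t` gets the new candidate `ys[t / s]` on top. -/
def build (s : ℕ) (ys : List ℕ) : List (List ℕ) → (ℕ → ℕ) → ℕ → List (List ℕ)
  | [], _, _ => []
  | v :: L, cnt, t =>
    if cnt v.headI < s then
      (v ++ ys) :: build s ys L (fun z => if z = v.headI then cnt z + 1 else cnt z) t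
    else
      (ys.getD (t / s % ys.length) 0 :: (v ++ ys.erase (ys.getD (t / s % ys.length) 0)))
        :: build s ys L cnt (t + 1)

variable {X Y : Finset ℕ} {s : ℕ} {ys : List ℕ}

lemma getD_mem (hys : ys ≠ []) (i : ℕ) : ys.getD (i % ys.length) 0 ∈ ys := by
  have hlen : 0 < ys.length := List.length_pos_iff.mpr hys
  have h : i % ys.length < ys.length := Nat.mod_lt _ hlen
  rw [List.getD_eq_getElem _ _ h]
  exact List.getElem_mem _

lemma head?_eq_headI {v : List ℕ} (h : v ≠ []) : v.head? = some v.headI := by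
  cases v with
  | nil => simp at h
  | cons a l => rfl

lemma head?_append_left {v : List ℕ} (h : v ≠ []) (w : List ℕ) :
    (v ++ w).head? = v.head? := by
  cases v with
  | nil => simp at h
  | cons a l => rfl

lemma headI_mem {v : List ℕ} (h : v ≠ []) : v.headI ∈ v := by
  cases v with
  | nil => simp at h
  | cons a l => simp [List.headI]

lemma filter_build (hys : ∀ y ∈ ys, y ∉ X) (hne : ys ≠ []) :
    ∀ (L : List (List ℕ)) (cnt : ℕ → ℕ) (t : ℕ),
      (∀ v ∈ L, ∀ c ∈ v, c ∈ X) →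
      restrict X (build s ys L cnt t) = L := by
  intro L
  induction L with
  | nil => intro cnt t _; rfl
  | cons v L ih =>
    intro cnt t hL
    have hv : ∀ c ∈ v, c ∈ X := hL v (by simp)
    have hvf : v.filter (fun c => decide (c ∈ X)) = v :=
      List.filter_eq_self.mpr (fun c hc => by simpa using hv c hc)
    have hysf : ∀ (w : List ℕ), (∀ c ∈ w, c ∈ ys) →
        w.filter (fun c => decide (c ∈ X)) = [] := by
      intro w hw
      refine List.filter_eq_nil_iff.mpr (fun c hc => by simpa using hys c (hw c hc))
    rw [build]
    split
    · rw [restrict, List.map_cons, List.filter_append, hvf,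
        hysf ys (fun c hc => hc), List.append_nil]
      rw [show (List.map _ (build s ys L _ t)) = restrict X (build s ys L _ t) from rfl,
        ih _ t (fun u hu => hL u (by simp [hu]))]
    · set w := ys.getD (t / s % ys.length) 0 with hw
      have hwys : w ∈ ys := getD_mem hne _
      rw [restrict, List.map_cons, List.filter_cons]
      have : ¬ (decide (w ∈ X) = true) := by simpa using hys w hwys
      simp only [this, if_neg, Bool.false_eq_true, if_false]
      rw [List.filter_append, hvf, hysf (ys.erase w) (fun c hc => List.mem_of_mem_erase hc),
        List.append_nil]
      rw [show (List.map _ (build s ys L _ (t+1))) = restrict X (build s ys L _ (t+1)) from rfl,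
        ih _ (t+1) (fun u hu => hL u (by simp [hu]))]

lemma isVote_build (hysX : ∀ y ∈ ys, y ∉ X) (hne : ys ≠ []) (hnd : ys.Nodup)
    (hysY : ∀ c, c ∈ ys ↔ c ∈ Y) :
    ∀ (L : List (List ℕ)) (cnt : ℕ → ℕ) (t : ℕ),
      (∀ v ∈ L, v.Nodup ∧ ∀ c, c ∈ v ↔ c ∈ X) →
      ∀ u ∈ build s ys L cnt t, u.Nodup ∧ ∀ c, c ∈ u ↔ c ∈ X ∪ Y := by
  intro L
  induction L with
  | nil => intro cnt t _ u hu; simp [build] at hu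
  | cons v L ih =>
    intro cnt t hL u hu
    obtain ⟨hvnd, hvX⟩ := hL v (by simp)
    have hdisj : ∀ c ∈ v, c ∉ ys := fun c hc hcy => hysX c hcy ((hvX c).mp hc)
    rw [build] at hu
    split at hu
    · rcases List.mem_cons.mp hu with h | h
      · subst h
        constructor
        · exact List.Nodup.append hvnd hnd (List.disjoint_left.mpr hdisj)
        · intro c
          simp only [List.mem_append, Finset.mem_union, hvX c, hysY c]
      · exact ih _ t (fun w hw => hL w (by simp [hw])) u h
    · rcases List.mem_cons.mp hu with h | h
      · subst h
        set w := ys.getD (t / s % ys.length) 0 with hwdef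
        have hwys : w ∈ ys := getD_mem hne _
        constructor
        · refine List.nodup_cons.mpr ⟨?_, ?_⟩
          · simp only [List.mem_append]
            push_neg
            exact ⟨fun hc => hysX w hwys ((hvX w).mp hc), hnd.not_mem_erase⟩
          · exact List.Nodup.append hvnd (hnd.erase w)
              (List.disjoint_left.mpr fun c hc hce => hdisj c hc (List.mem_of_mem_erase hce))
        · intro c
          simp only [List.mem_cons, List.mem_append, Finset.mem_union, hvX c, ← hysY c]
          constructor
          · rintro (rfl | h | h)
            · exact Or.inr hwys
            · exact Or.inl h
            · exact Or.inr (List.mem_of_mem_erase h)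
          · rintro (h | h)
            · exact Or.inr (Or.inl h)
            · by_cases hc : c = w
              · exact Or.inl hc
              · exact Or.inr (Or.inr ((List.Nodup.mem_erase_iff hnd).mpr ⟨hc, h⟩))
      · exact ih _ (t+1) (fun w hw => hL w (by simp [hw])) u h

/-- Upper bound on the plurality score of an original candidate. -/
lemma ntop_build_le (hysX : ∀ y ∈ ys, y ∉ X) (hne : ys ≠ []) {x : ℕ} (hxX : x ∈ X) :
    ∀ (L : List (List ℕ)) (cnt : ℕ → ℕ) (t : ℕ),
      (∀ v ∈ L, v ≠ [] ∧ ∀ c ∈ v, c ∈ X) →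
      ntop (build s ys L cnt t) x ≤ s - cnt x := by
  intro L
  induction L with
  | nil => intro cnt t _; simp [build, ntop]
  | cons v L ih =>
    intro cnt t hL
    obtain ⟨hvne, hvX⟩ := hL v (by simp)
    rw [build]
    split
    · rename_i hlt
      rw [ntop_cons, head?_append_left hvne, head?_eq_headI hvne]
      have hrec : ntop (build s ys L (fun z => if z = v.headI then cnt z + 1 else cnt z) t) x
          ≤ s - (if x = v.headI then cnt x + 1 else cnt x) :=
        ih (fun z => if z = v.headI then cnt z + 1 else cnt z) t
          (fun u hu => hL u (by simp [hu]))
      by_cases hx : x = v.headI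
      · rw [if_pos hx] at hrec
        rw [if_pos (by rw [hx])]
        subst hx
        omega
      · rw [if_neg hx] at hrec
        rw [if_neg (by simpa using fun h => hx h.symm)]
        omega
    · set w := ys.getD (t / s % ys.length) 0 with hwdef
      have hwx : w ≠ x := fun h => hysX w (getD_mem hne _) (h ▸ hxX)
      rw [ntop_cons]
      simp only [List.head?_cons, Option.some.injEq, if_neg hwx, zero_add]
      exact ih cnt (t+1) (fun u hu => hL u (by simp [hu]))

/-- Lower bound on the plurality score of `x`. -/
lemma ntop_build_ge {x : ℕ} :
    ∀ (L : List (List ℕ)) (cnt : ℕ → ℕ) (t : ℕ),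
      (∀ v ∈ L, v ≠ []) →
      cnt x + ntop L x ≤ s →
      ntop L x ≤ ntop (build s ys L cnt t) x := by
  intro L
  induction L with
  | nil => intro cnt t _ _; simp [build, ntop]
  | cons v L ih =>
    intro cnt t hL hcnt
    have hvne : v ≠ [] := hL v (by simp)
    rw [ntop_cons] at hcnt ⊢
    rw [build]
    by_cases hx : v.headI = x
    · rw [head?_eq_headI hvne, if_pos (by rw [hx])] at hcnt ⊢
      have hlt : cnt v.headI < s := by rw [hx]; omega
      rw [if_pos hlt, ntop_cons, head?_append_left hvne, head?_eq_headI hvne,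
        if_pos (by rw [hx])]
      have hrec := ih (fun z => if z = v.headI then cnt z + 1 else cnt z) t
        (fun u hu => hL u (by simp [hu]))
        (by simp only [if_pos (hx.symm)]; omega)
      omega
    · have hvhx : ¬ (v.head? = some x) := by
        rw [head?_eq_headI hvne]; simpa using fun h => hx h
      rw [if_neg hvhx] at hcnt ⊢
      split
      · rw [ntop_cons, head?_append_left hvne, if_neg hvhx]
        have hrec := ih (fun z => if z = v.headI then cnt z + 1 else cnt z) t
          (fun u hu => hL u (by simp [hu]))
          (by show (if x = v.headI then cnt x + 1 else cnt x) + ntop L x ≤ s;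
              rw [if_neg (fun h : x = v.headI => hx h.symm)]; omega)
        omega
      · rw [ntop_cons]
        have hrec := ih cnt (t+1) (fun u hu => hL u (by simp [hu])) (by omega)
        omega

/-- Total remaining surplus of the original candidates. -/
def surplus (X : Finset ℕ) (s : ℕ) (L : List (List ℕ)) (cnt : ℕ → ℕ) : ℕ :=
  ∑ x ∈ X, (cnt x + ntop L x - s)

lemma surplus_cons_kept {v : List ℕ} (hvne : v ≠ []) (L : List (List ℕ)) (cnt : ℕ → ℕ) :
    surplus X s L (fun z => if z = v.headI then cnt z + 1 else cnt z)
      = surplus X s (v :: L) cnt := by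
  refine Finset.sum_congr rfl fun x _ => ?_
  show (if x = v.headI then cnt x + 1 else cnt x) + ntop L x - s = _
  rw [ntop_cons, head?_eq_headI hvne]
  by_cases hx : x = v.headI
  · subst hx; rw [if_pos rfl, if_pos rfl]; omega
  · rw [if_neg hx, if_neg (by simpa using fun h => hx h.symm)]; omega

lemma surplus_cons_demoted {v : List ℕ} (hvne : v ≠ []) (hhX : v.headI ∈ X)
    (L : List (List ℕ)) (cnt : ℕ → ℕ) (hge : s ≤ cnt v.headI) :
    surplus X s (v :: L) cnt = surplus X s L cnt + 1 := by
  have : ∀ x ∈ X, cnt x + ntop (v :: L) x - s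
      = (cnt x + ntop L x - s) + (if x = v.headI then 1 else 0) := by
    intro x _
    rw [ntop_cons, head?_eq_headI hvne]
    show cnt x + ((if some v.headI = some x then 1 else 0) + ntop L x) - s = _
    by_cases hx : x = v.headI
    · subst hx; simp only [if_pos rfl]; omega
    · rw [if_neg (by simpa using fun h => hx h.symm), if_neg hx]; omega
  rw [surplus, Finset.sum_congr rfl this, Finset.sum_add_distrib,
    Finset.sum_ite_eq' X v.headI (fun _ => 1), if_pos hhX]
  rfl

/-- Upper bound on the plurality score of the `r`-th new candidate. -/
lemma ntop_build_ys (hysX : ∀ y ∈ ys, y ∉ X) (hnd : ys.Nodup) (hs : 1 ≤ s) :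
    ∀ (L : List (List ℕ)) (cnt : ℕ → ℕ) (t : ℕ),
      (∀ v ∈ L, v ≠ [] ∧ ∀ c ∈ v, c ∈ X) →
      t + surplus X s L cnt ≤ ys.length * s →
      ∀ (r : ℕ) (hr : r < ys.length),
        ntop (build s ys L cnt t) ys[r] ≤ (r+1)*s - max t (r*s) := by
  intro L
  induction L with
  | nil => intro cnt t _ _ r hr; simp [build, ntop]
  | cons v L ih =>
    intro cnt t hL hinv r hr
    obtain ⟨hvne, hvX⟩ := hL v (by simp)
    have hhX : v.headI ∈ X := hvX _ (headI_mem hvne)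
    have hyr : ys[r] ∈ ys := List.getElem_mem hr
    rw [build]
    split
    · rename_i hlt
      rw [ntop_cons, head?_append_left hvne, head?_eq_headI hvne,
        if_neg (by
          simp only [Option.some.injEq]
          intro h
          exact hysX _ hyr (h ▸ hhX))]
      rw [zero_add]
      exact ih _ t (fun u hu => hL u (by simp [hu]))
        (by rw [surplus_cons_kept hvne]; exact hinv) r hr
    · rename_i hge
      push_neg at hge
      have hsur : surplus X s (v :: L) cnt = surplus X s L cnt + 1 :=
        surplus_cons_demoted hvne hhX L cnt hge
      have ht1 : t + 1 + surplus X s L cnt ≤ ys.length * s := by omega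
      have htlt : t < ys.length * s := by omega
      have hdiv : t / s < ys.length := (Nat.div_lt_iff_lt_mul hs).mpr htlt
      have hmod : t / s % ys.length = t / s := Nat.mod_eq_of_lt hdiv
      have hgetD : ys.getD (t / s % ys.length) 0 = ys[t/s] := by
        rw [hmod, List.getD_eq_getElem _ _ hdiv]
      rw [ntop_cons, List.head?_cons, hgetD]
      by_cases hreq : t / s = r
      · subst hreq
        have h1 : t / s * s ≤ t := Nat.div_mul_le_self t s
        have h2 : t < (t / s + 1) * s := (Nat.div_lt_iff_lt_mul hs).mp (by omega)
        rw [if_pos rfl]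
        have hrec := ih cnt (t+1) (fun u hu => hL u (by simp [hu])) ht1 _ hr
        omega
      · rw [if_neg (by
          simp only [Option.some.injEq]
          intro h
          exact hreq ((List.Nodup.getElem_inj_iff hnd).mp h)), zero_add]
        have hrec := ih cnt (t+1) (fun u hu => hL u (by simp [hu])) ht1 r hr
        omega

/-! ### Counting lemmas for the forward direction -/

lemma countP_le_add {α : Type*} (l : List α) (p q r : α → Bool)
    (h : ∀ a ∈ l, q a → (p a ∨ r a)) :
    l.countP q ≤ l.countP p + l.countP r := by
  induction l with
  | nil => simp
  | cons a l ih =>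
    simp only [List.countP_cons]
    have := ih (fun b hb => h b (by simp [hb]))
    have ha := h a (by simp)
    by_cases hq : q a = true <;> by_cases hp : p a = true <;> by_cases hr : r a = true <;>
      simp_all <;> omega

lemma sum_countP_le {α β : Type*} (l : List α) (Xs : Finset β) (f : β → α → Bool)
    (g : α → Bool)
    (h1 : ∀ a ∈ l, ∀ x ∈ Xs, ∀ x' ∈ Xs, f x a → f x' a → x = x')
    (h2 : ∀ a ∈ l, ∀ x ∈ Xs, f x a → g a) :
    ∑ x ∈ Xs, l.countP (f x) ≤ l.countP g := by
  induction l with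
  | nil => simp
  | cons a l ih =>
    simp only [List.countP_cons, Finset.sum_add_distrib]
    have hrec := ih (fun b hb => h1 b (by simp [hb])) (fun b hb => h2 b (by simp [hb]))
    have hone : (∑ x ∈ Xs, if f x a then 1 else 0) ≤ (if g a then 1 else 0) := by
      rw [Finset.sum_boole]
      by_cases he : ∃ x ∈ Xs, f x a
      · obtain ⟨x0, hx0, hfx0⟩ := he
        rw [if_pos (h2 a (by simp) x0 hx0 hfx0)]
        have : Xs.filter (fun x => f x a) ⊆ {x0} := by
          intro x hxf
          simp only [Finset.mem_filter] at hxf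
          simp [h1 a (by simp) x hxf.1 x0 hx0 hxf.2 hfx0]
        calc ((Xs.filter (fun x => f x a)).card : ℕ) ≤ ({x0} : Finset β).card :=
              Finset.card_le_card this
          _ = 1 := Finset.card_singleton x0
      · push_neg at he
        have : Xs.filter (fun x => f x a) = ∅ :=
          Finset.filter_eq_empty_iff.mpr (fun {x} hx => by simpa using he x hx)
        rw [this]
        simp
    omega

lemma countP_le_sum {α β : Type*} (l : List α) (Xs : Finset β) (f : β → α → Bool)
    (g : α → Bool)
    (h : ∀ a ∈ l, g a → ∃ x ∈ Xs, f x a) :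
    l.countP g ≤ ∑ x ∈ Xs, l.countP (f x) := by
  induction l with
  | nil => simp
  | cons a l ih =>
    simp only [List.countP_cons, Finset.sum_add_distrib]
    have hrec := ih (fun b hb => h b (by simp [hb]))
    have hone : (if g a then 1 else 0) ≤ (∑ x ∈ Xs, if f x a then 1 else 0) := by
      by_cases hg : g a = true
      · obtain ⟨x0, hx0, hfx0⟩ := h a (by simp) hg
        rw [if_pos hg]
        calc (1 : ℕ) = (if f x0 a then 1 else 0) := by rw [if_pos hfx0]
          _ ≤ _ := Finset.single_le_sum (f := fun x => if f x a then 1 else 0)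
              (fun _ _ => Nat.zero_le _) hx0
      · simp [hg]
    omega

lemma filter_head {X : Finset ℕ} {v : List ℕ} {x : ℕ} (hx : x ∈ X) (hv : v.head? = some x) :
    (v.filter (fun c => decide (c ∈ X))).head? = some x := by
  cases v with
  | nil => simp at hv
  | cons a l =>
    simp only [List.head?_cons, Option.some.injEq] at hv
    subst hv
    rw [List.filter_cons, if_pos (by simpa using hx)]
    rfl

/-- Plurality characterization of possible cowinners w.r.t. adding `k` new candidates. -/
theorem stmt_0 (X : Finset ℕ) (P : Profile) (hP : IsProfile X P)
    (xstar : ℕ) (hx : xstar ∈ X) (k : ℕ) (hk : 1 ≤ k) :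
    (∃ Y : Finset ℕ, Disjoint X Y ∧ Y.card = k ∧
      ∃ P', IsProfile (X ∪ Y) P' ∧ Extends X P' P ∧
        ∀ z ∈ X ∪ Y, ntop P' z ≤ ntop P' xstar) ↔
      ∑ x ∈ X, (ntop P x - ntop P xstar) ≤ k * ntop P xstar := by
  set s := ntop P xstar with hs
  constructor
  · -- forward direction
    rintro ⟨Y, hdisj, hcard, P', hP', hext, hwin⟩
    have hvotes : ∀ v ∈ P', v.head? = some v.headI ∧ v.headI ∈ X ∪ Y := by
      intro v hv
      obtain ⟨hnd, hmem⟩ := hP' v hv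
      have hvne : v ≠ [] := by
        intro h; subst h
        exact (by simpa using (hmem xstar).mpr (Finset.mem_union_left _ hx))
      exact ⟨head?_eq_headI hvne, (hmem _).mp (headI_mem hvne)⟩
    have hntopP : ∀ x : ℕ, ntop P x
        = P'.countP (fun v => decide ((v.filter (fun c => decide (c ∈ X))).head? = some x)) := by
      intro x
      rw [← hext, restrict, ntop, List.countP_map]
      rfl
    -- xstar's score can only decrease
    have hstar_le : ntop P' xstar ≤ s := by
      rw [hs, hntopP]
      apply List.countP_mono_left
      intro v _ hpv
      simp only [decide_eq_true_eq] at hpv ⊢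
      exact filter_head hx hpv
    -- main per-candidate inequality
    have step1 : ∀ x ∈ X, ntop P x ≤ ntop P' x
        + P'.countP (fun v => decide ((v.filter (fun c => decide (c ∈ X))).head? = some x)
            && decide (∃ y ∈ Y, v.head? = some y)) := by
      intro x hxX
      rw [hntopP x]
      apply countP_le_add
      intro v hv hq
      obtain ⟨hhead, hmem⟩ := hvotes v hv
      simp only [decide_eq_true_eq, Bool.and_eq_true] at hq ⊢
      rcases Finset.mem_union.mp hmem with hX | hY
      · left
        have := filter_head hX hhead
        rw [this] at hq
        rw [hhead]
        exact congrArg some (by injection hq)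
      · right
        exact ⟨hq, ⟨v.headI, hY, hhead⟩⟩
    have step2 : ∑ x ∈ X,
        P'.countP (fun v => decide ((v.filter (fun c => decide (c ∈ X))).head? = some x)
            && decide (∃ y ∈ Y, v.head? = some y))
        ≤ P'.countP (fun v => decide (∃ y ∈ Y, v.head? = some y)) := by
      apply sum_countP_le
      · intro v _ x _ x' _ hfx hfx'
        simp only [Bool.and_eq_true, decide_eq_true_eq] at hfx hfx'
        have := hfx.1.symm.trans hfx'.1
        injection this
      · intro v _ x _ hfx
        simp only [Bool.and_eq_true] at hfx
        exact hfx.2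
    have step3 : P'.countP (fun v => decide (∃ y ∈ Y, v.head? = some y))
        ≤ ∑ y ∈ Y, ntop P' y := by
      apply countP_le_sum
      intro v _ hg
      simp only [decide_eq_true_eq] at hg
      obtain ⟨y, hy, hh⟩ := hg
      exact ⟨y, hy, by simp [hh]⟩
    have step4 : ∑ y ∈ Y, ntop P' y ≤ k * s := by
      calc ∑ y ∈ Y, ntop P' y ≤ ∑ _y ∈ Y, s :=
            Finset.sum_le_sum (fun y hy =>
              le_trans (hwin y (Finset.mem_union_right _ hy)) hstar_le)
        _ = k * s := by rw [Finset.sum_const, hcard, smul_eq_mul]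
    calc ∑ x ∈ X, (ntop P x - s)
        ≤ ∑ x ∈ X,
            P'.countP (fun v => decide ((v.filter (fun c => decide (c ∈ X))).head? = some x)
              && decide (∃ y ∈ Y, v.head? = some y)) := by
          apply Finset.sum_le_sum
          intro x hxX
          have h1 := step1 x hxX
          have h2 : ntop P' x ≤ s := le_trans (hwin x (Finset.mem_union_left _ hxX)) hstar_le
          omega
      _ ≤ P'.countP (fun v => decide (∃ y ∈ Y, v.head? = some y)) := step2
      _ ≤ ∑ y ∈ Y, ntop P' y := step3
      _ ≤ k * s := step4
  · -- backward direction
    intro hsum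
    set S := X.sup id with hS
    have hSle : ∀ x ∈ X, x ≤ S := fun x hxX => Finset.le_sup (f := id) hxX
    set ys : List ℕ := (List.range k).map (fun i => S + 1 + i) with hys
    set Y : Finset ℕ := (Finset.range k).image (fun i => S + 1 + i) with hY
    have hinj : Function.Injective (fun i => S + 1 + i) := fun a b h => by
      simp only [] at h; omega
    have hcard : Y.card = k := by
      rw [hY, Finset.card_image_of_injective _ hinj, Finset.card_range]
    have hmemY : ∀ c, c ∈ ys ↔ c ∈ Y := by
      intro c
      simp [hys, hY, List.mem_map, List.mem_range, Finset.mem_image, Finset.mem_range]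
    have hysX : ∀ y ∈ ys, y ∉ X := by
      intro y hy hyX
      simp only [hys, List.mem_map, List.mem_range] at hy
      obtain ⟨i, _, rfl⟩ := hy
      have := hSle _ hyX
      omega
    have hdisj : Disjoint X Y := by
      rw [Finset.disjoint_left]
      intro a haX haY
      exact hysX a ((hmemY a).mpr haY) haX
    have hlen : ys.length = k := by simp [hys]
    have hne : ys ≠ [] := by
      intro h
      rw [h] at hlen
      simp at hlen
      omega
    have hndys : ys.Nodup := (@List.nodup_range k).map hinj
    have hPvotes : ∀ v ∈ P, v ≠ [] ∧ ∀ c ∈ v, c ∈ X := by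
      intro v hv
      obtain ⟨hnd, hmem⟩ := hP v hv
      refine ⟨?_, fun c hc => (hmem c).mp hc⟩
      intro h; subst h
      exact (by simpa using (hmem xstar).mpr hx)
    by_cases hs0 : s = 0
    · -- then P = [] and the empty extension works
      have hP0 : P = [] := by
        cases P with
        | nil => rfl
        | cons v Q =>
          exfalso
          obtain ⟨hvne, hvX⟩ := hPvotes v (by simp)
          have hhX : v.headI ∈ X := hvX _ (headI_mem hvne)
          have h1 : 1 ≤ ntop (v :: Q) v.headI := by
            rw [ntop_cons, head?_eq_headI hvne, if_pos rfl]
            omega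
          have h0 : ntop (v :: Q) v.headI - s ≤ ∑ x ∈ X, (ntop (v :: Q) x - s) :=
            Finset.single_le_sum (f := fun x => ntop (v :: Q) x - s)
              (fun _ _ => Nat.zero_le _) hhX
          have hks : k * s = 0 := by rw [hs0]; ring
          omega
      refine ⟨Y, hdisj, hcard, [], fun v hv => by simp at hv, ?_, ?_⟩
      · rw [Extends, restrict, hP0]; rfl
      · intro z _
        simp [ntop]
    · have hs1 : 1 ≤ s := by omega
      refine ⟨Y, hdisj, hcard, build s ys P (fun _ => 0) 0, ?_, ?_, ?_⟩
      · intro v hv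
        exact isVote_build hysX hne hndys hmemY P (fun _ => 0) 0
          (fun u hu => hP u hu) v hv
      · exact filter_build hysX hne P (fun _ => 0) 0 (fun v hv => (hPvotes v hv).2)
      · intro z hz
        have hstar_ge : s ≤ ntop (build s ys P (fun _ => 0) 0) xstar :=
          ntop_build_ge P (fun _ => 0) 0 (fun v hv => (hPvotes v hv).1)
            (by show (0:ℕ) + ntop P xstar ≤ s; rw [hs]; omega)
        rcases Finset.mem_union.mp hz with hzX | hzY
        · have := ntop_build_le (s := s) hysX hne hzX P (fun _ => 0) 0 hPvotes
          omega
        · obtain ⟨i, hi, hiz⟩ := List.getElem_of_mem ((hmemY z).mpr hzY)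
          have hinv : 0 + surplus X s P (fun _ => 0) ≤ ys.length * s := by
            rw [hlen, surplus]
            simpa using hsum
          have hbd := ntop_build_ys hysX hndys hs1 P (fun _ => 0) 0 hPvotes hinv i hi
          rw [hiz] at hbd
          have : (i + 1) * s = i * s + s := by ring
          omega
end PcWNC
end

section
/- Let P be a profile over X = {x*, x_1, ..., x_p}, let Y = {y_1,...,y_k} be k new candidates, and let s = (s_1 ≥ s_2 ≥ ... ≥ s_{p+1+k}) be a scoring vector with s_i − s_{i+1} ≤ s_{i+1} − s_{i+2} for all i (convex differences toward the top). Then x* is a possible cowinner for the scoring rule induced by s with respect to adding the k candidates of Y if and only if x* is a cowinner in the specific extension P̂ of P obtained by inserting y_1,...,y_k immediately below x* (in arbitrary fixed order) in every vote. -/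
namespace PcWNC

lemma s_mono (s : ℕ → ℤ) (hmono : ∀ i, s (i + 1) ≤ s i) : ∀ {n m : ℕ}, n ≤ m → s m ≤ s n := by
  intro n m h
  induction m with
  | zero => simp_all
  | succ m ih =>
    rcases Nat.lt_or_ge n (m+1) with h' | h'
    · exact le_trans (hmono m) (ih (Nat.lt_succ_iff.mp h'))
    · have : n = m + 1 := le_antisymm h h'
      subst this; rfl

lemma gap_mono (s : ℕ → ℤ) (hconv : ∀ i, s i - s (i + 1) ≤ s (i + 1) - s (i + 2)) :
    ∀ {i j : ℕ}, i ≤ j → s i - s (i + 1) ≤ s j - s (j + 1) := by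
  intro i j h
  induction j with
  | zero => simp_all
  | succ j ih =>
    rcases Nat.lt_or_ge i (j+1) with h' | h'
    · exact le_trans (ih (Nat.lt_succ_iff.mp h')) (hconv j)
    · have : i = j + 1 := le_antisymm h h'
      subst this; rfl

lemma gapsum_mono (s : ℕ → ℤ) (hconv : ∀ i, s i - s (i + 1) ≤ s (i + 1) - s (i + 2)) :
    ∀ (t : ℕ) {a b : ℕ}, b ≤ a → s b - s (b + t) ≤ s a - s (a + t) := by
  intro t
  induction t with
  | zero => intro a b _; simp
  | succ t ih =>
    intro a b hba
    have h1 := ih hba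
    have h2 : s (b + t) - s (b + t + 1) ≤ s (a + t) - s (a + t + 1) :=
      gap_mono s hconv (by omega)
    have e1 : b + (t + 1) = b + t + 1 := by omega
    have e2 : a + (t + 1) = a + t + 1 := by omega
    rw [e1, e2]; linarith






lemma decomp {x : ℕ} {v : List ℕ} (hx : x ∈ v) :
    ∃ l₁ l₂ : List ℕ, v = l₁ ++ x :: l₂ ∧ x ∉ l₁ ∧
      ∀ ys : List ℕ, insertBelow x ys v = l₁ ++ x :: (ys ++ l₂) := by
  have hd : v.dropWhile (fun c => decide (c ≠ x)) ≠ [] := by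
    intro h
    have := List.dropWhile_eq_nil_iff.mp h x hx
    simp at this
  have hhead : (v.dropWhile (fun c => decide (c ≠ x))).head hd = x := by
    simpa using List.head_dropWhile_not (fun c => decide (c ≠ x)) hd
  have hd2 : v.dropWhile (fun c => decide (c ≠ x))
      = x :: (v.dropWhile (fun c => decide (c ≠ x))).tail := by
    have hd2 := List.cons_head_tail hd
    rw [hhead] at hd2
    exact hd2.symm
  refine ⟨v.takeWhile (fun c => decide (c ≠ x)),
    (v.dropWhile (fun c => decide (c ≠ x))).tail, ?_, ?_, ?_⟩
  · conv_lhs => rw [← List.takeWhile_append_dropWhile (p := fun c => decide (c ≠ x)) (l := v), hd2]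
  · intro hmem
    have := List.mem_takeWhile_imp hmem
    simp at this
  · intro ys
    unfold insertBelow
    rw [hd2]
    simp

lemma idx_self {x : ℕ} {l₁ l₂ : List ℕ} (hx : x ∉ l₁) :
    List.idxOf x (l₁ ++ x :: l₂) = l₁.length := by
  rw [List.idxOf_append_of_notMem hx, List.idxOf_cons_self]
  omega

lemma idx_left {z : ℕ} {l₁ rest : List ℕ} (hz : z ∈ l₁) :
    List.idxOf z (l₁ ++ rest) = List.idxOf z l₁ :=
  List.idxOf_append_of_mem hz

lemma idx_right {z x : ℕ} {l₁ l₂ : List ℕ} (hz : z ∉ l₁) (hzx : z ≠ x) :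
    List.idxOf z (l₁ ++ x :: l₂) = l₁.length + 1 + List.idxOf z l₂ := by
  rw [List.idxOf_append_of_notMem hz, List.idxOf_cons_ne _ (Ne.symm hzx)]
  omega

lemma idxOf_filter (p : ℕ → Bool) {c : ℕ} (hc : p c = true) :
    ∀ (l : List ℕ), c ∈ l →
      List.idxOf c (l.filter p) = List.countP p (l.take (List.idxOf c l)) := by
  intro l
  induction l with
  | nil => simp
  | cons a t ih =>
    intro hcl
    by_cases hac : a = c
    · subst hac
      rw [List.idxOf_cons_self, List.filter_cons_of_pos hc, List.idxOf_cons_self]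
      simp
    · have hct : c ∈ t := by
        rcases List.mem_cons.mp hcl with h | h
        · exact absurd h.symm hac
        · exact h
      rw [List.idxOf_cons_ne _ hac]
      have htake : (a :: t).take ((List.idxOf c t).succ) = a :: t.take (List.idxOf c t) := rfl
      rw [htake, List.countP_cons]
      by_cases hpa : p a = true
      · rw [List.filter_cons_of_pos hpa, List.idxOf_cons_ne _ hac, ih hct]
        simp [hpa]
      · rw [List.filter_cons_of_neg hpa, ih hct]
        simp [hpa]

lemma idx_split (p : ℕ → Bool) {c : ℕ} (hc : p c = true) {l : List ℕ} (hcl : c ∈ l) :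
    List.idxOf c l = List.idxOf c (l.filter p)
      + List.countP (fun a => !p a) (l.take (List.idxOf c l)) := by
  have hlen : (l.take (List.idxOf c l)).length = List.idxOf c l := by
    rw [List.length_take]
    exact min_eq_left List.idxOf_le_length
  have h2 : List.idxOf c l = List.countP p (l.take (List.idxOf c l))
      + List.countP (fun a => decide ¬ p a = true) (l.take (List.idxOf c l)) := by
    conv_lhs => rw [← hlen]
    exact List.length_eq_countP_add_countP p
  have hcong : List.countP (fun a => decide ¬ p a = true) (l.take (List.idxOf c l))
      = List.countP (fun a => !p a) (l.take (List.idxOf c l)) := by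
    apply List.countP_congr
    intro a _
    cases p a <;> simp
  rw [idxOf_filter p hc l hcl]
  omega

lemma idx_filter_le (p : ℕ → Bool) {c d : ℕ} {l : List ℕ}
    (h : List.idxOf c l ≤ List.idxOf d l) (hc : p c = true) (hd : p d = true)
    (hcl : c ∈ l) (hdl : d ∈ l) :
    List.idxOf c (l.filter p) ≤ List.idxOf d (l.filter p) := by
  rw [idxOf_filter p hc l hcl, idxOf_filter p hd l hdl]
  apply List.Sublist.countP_le
  have : l.take (List.idxOf c l) = (l.take (List.idxOf d l)).take (List.idxOf c l) := by
    rw [List.take_take, min_eq_left h]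
  rw [this]
  exact List.take_sublist _ _



lemma countP_take_mono (q : ℕ → Bool) {n m : ℕ} (h : n ≤ m) (l : List ℕ) :
    List.countP q (l.take n) ≤ List.countP q (l.take m) := by
  have : l.take n = (l.take m).take n := by rw [List.take_take, min_eq_left h]
  rw [this]
  exact List.Sublist.countP_le (p := q) (List.take_sublist _ _)

lemma nodup_len_eq {l₁ l₂ : List ℕ} (h₁ : l₁.Nodup) (h₂ : l₂.Nodup)
    (h : ∀ c, c ∈ l₁ ↔ c ∈ l₂) : l₁.length = l₂.length := by
  rw [← List.toFinset_card_of_nodup h₁, ← List.toFinset_card_of_nodup h₂]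
  congr 1
  ext c
  simp [h c]

lemma hat_vote (X Y : Finset ℕ) (hXY : Disjoint X Y) (xstar : ℕ) (hx : xstar ∈ X)
    (ys : List ℕ) (hnd : ys.Nodup) (hys : ∀ c, c ∈ ys ↔ c ∈ Y)
    {v : List ℕ} (hv : IsVote X v) :
    IsVote (X ∪ Y) (insertBelow xstar ys v) ∧
      (insertBelow xstar ys v).filter (fun c => decide (c ∈ X)) = v := by
  obtain ⟨hvnd, hvmem⟩ := hv
  have hxv : xstar ∈ v := (hvmem xstar).mpr hx
  obtain ⟨l₁, l₂, hveq, hxl₁, hins⟩ := decomp hxv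
  have hmemX : ∀ c, c ∈ l₁ ∨ c = xstar ∨ c ∈ l₂ → c ∈ X := by
    intro c hc
    apply (hvmem c).mp
    rw [hveq]
    simp [List.mem_append, List.mem_cons]
    tauto
  have hysY : ∀ c ∈ ys, c ∉ X := fun c hc =>
    Finset.disjoint_right.mp hXY ((hys c).mp hc)
  rw [hins ys]
  rw [hveq] at hvnd
  refine ⟨⟨?_, ?_⟩, ?_⟩
  · -- Nodup
    have hdisj : ∀ c ∈ ys, c ∉ l₁ ∧ c ≠ xstar ∧ c ∉ l₂ := by
      intro c hc
      have hcX : c ∉ X := hysY c hc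
      exact ⟨fun h => hcX (hmemX c (Or.inl h)), fun h => hcX (h ▸ hx),
        fun h => hcX (hmemX c (Or.inr (Or.inr h)))⟩
    simp only [List.nodup_append, List.nodup_cons, List.mem_append, List.mem_cons] at hvnd ⊢
    obtain ⟨h1, ⟨h2, h3⟩, h4⟩ := hvnd
    refine ⟨h1, ⟨?_, hnd, h3, ?_⟩, ?_⟩
    · rintro (h | h)
      · exact (hdisj _ h).2.1 rfl
      · exact h2 h
    · intro c hc d hd hcd; subst hcd; exact (hdisj c hc).2.2 hd
    · intro c hc d hd hcd
      subst hcd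
      rcases hd with h | h | h
      · exact h4 c hc c (Or.inl h) rfl
      · exact (hdisj c h).1 hc
      · exact h4 c hc c (Or.inr h) rfl
  · -- membership
    intro c
    simp only [List.mem_append, List.mem_cons, Finset.mem_union]
    constructor
    · rintro (hc | hc | hc | hc)
      · exact Or.inl (hmemX c (Or.inl hc))
      · exact Or.inl (hc ▸ hx)
      · exact Or.inr ((hys c).mp hc)
      · exact Or.inl (hmemX c (Or.inr (Or.inr hc)))
    · rintro (hc | hc)
      · have : c ∈ v := (hvmem c).mpr hc
        rw [hveq] at this
        simp only [List.mem_append, List.mem_cons] at this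
        tauto
      · exact Or.inr (Or.inr (Or.inl ((hys c).mpr hc)))
  · -- filter
    have h1 : l₁.filter (fun c => decide (c ∈ X)) = l₁ :=
      List.filter_eq_self.mpr (fun c hc => by simp [hmemX c (Or.inl hc)])
    have h2 : l₂.filter (fun c => decide (c ∈ X)) = l₂ :=
      List.filter_eq_self.mpr (fun c hc => by simp [hmemX c (Or.inr (Or.inr hc))])
    have h3 : ys.filter (fun c => decide (c ∈ X)) = [] :=
      List.filter_eq_nil_iff.mpr (fun c hc => by simp [hysY c hc])
    rw [List.filter_append, List.filter_cons_of_pos (by simp [hx]), List.filter_append,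
      h1, h2, h3, hveq]
    simp

lemma pervote (s : ℕ → ℤ) (hmono : ∀ i, s (i + 1) ≤ s i)
    (hconv : ∀ i, s i - s (i + 1) ≤ s (i + 1) - s (i + 2))
    (X Y : Finset ℕ) (hXY : Disjoint X Y) (xstar : ℕ) (hx : xstar ∈ X)
    (ys : List ℕ) (hnd : ys.Nodup) (hys : ∀ c, c ∈ ys ↔ c ∈ Y)
    (v' : List ℕ) (hv' : IsVote (X ∪ Y) v') (z : ℕ) (hz : z ∈ X) :
    s ((insertBelow xstar ys (v'.filter (fun c => decide (c ∈ X)))).idxOf z)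
      + s (v'.idxOf xstar)
    ≤ s ((insertBelow xstar ys (v'.filter (fun c => decide (c ∈ X)))).idxOf xstar)
      + s (v'.idxOf z) := by
  obtain ⟨hv'nd, hv'mem⟩ := hv'
  set p : ℕ → Bool := fun c => decide (c ∈ X) with hp
  set v : List ℕ := v'.filter p with hvdef
  have hpx : p xstar = true := by simp [hp, hx]
  have hpz : p z = true := by simp [hp, hz]
  have hxv' : xstar ∈ v' := (hv'mem xstar).mpr (Finset.mem_union_left _ hx)
  have hzv' : z ∈ v' := (hv'mem z).mpr (Finset.mem_union_left _ hz)
  have hxv : xstar ∈ v := List.mem_filter.mpr ⟨hxv', hpx⟩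
  have hzv : z ∈ v := List.mem_filter.mpr ⟨hzv', hpz⟩
  have hvnd : v.Nodup := List.Nodup.filter p hv'nd
  by_cases hzx : z = xstar
  · subst hzx; exact le_refl _
  obtain ⟨l₁, l₂, hveq, hxl₁, hins⟩ := decomp hxv
  have hidxa : v.idxOf xstar = l₁.length := by rw [hveq]; exact idx_self hxl₁
  have hidxahat : (insertBelow xstar ys v).idxOf xstar = l₁.length := by
    rw [hins ys]; exact idx_self hxl₁
  have hsplitx := idx_split p hpx hxv'
  have hsplitz := idx_split p hpz hzv'
  rw [← hvdef, hidxa] at hsplitx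
  rw [← hvdef] at hsplitz
  have hzys : z ∉ ys := fun hc => Finset.disjoint_left.mp hXY hz ((hys z).mp hc)
  by_cases hzl₁ : z ∈ l₁
  · -- z is above xstar
    have hidxb : v.idxOf z = List.idxOf z l₁ := by rw [hveq]; exact idx_left hzl₁
    have hidxbhat : (insertBelow xstar ys v).idxOf z = List.idxOf z l₁ := by
      rw [hins ys]; exact idx_left hzl₁
    have hba : List.idxOf z l₁ < l₁.length := List.idxOf_lt_length_iff.mpr hzl₁
    have hblt : v'.idxOf z ≤ v'.idxOf xstar := by
      by_contra hcon
      push_neg at hcon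
      have := idx_filter_le p (le_of_lt hcon) hpx hpz hxv' hzv'
      rw [← hvdef, hidxa, hidxb] at this
      omega
    have hut := countP_take_mono (fun a => !p a) hblt v'
    have hg : s (List.idxOf z l₁) - s (List.idxOf z l₁
          + List.countP (fun a => !p a) (v'.take (v'.idxOf xstar)))
        ≤ s l₁.length - s (l₁.length
          + List.countP (fun a => !p a) (v'.take (v'.idxOf xstar))) :=
      gapsum_mono s hconv _ (le_of_lt hba)
    have hm : s (List.idxOf z l₁
          + List.countP (fun a => !p a) (v'.take (v'.idxOf xstar)))
        ≤ s (List.idxOf z l₁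
          + List.countP (fun a => !p a) (v'.take (v'.idxOf z))) :=
      s_mono s hmono (by omega)
    have he1 : v'.idxOf xstar = l₁.length
        + List.countP (fun a => !p a) (v'.take (v'.idxOf xstar)) := hsplitx
    have he2 : v'.idxOf z = List.idxOf z l₁
        + List.countP (fun a => !p a) (v'.take (v'.idxOf z)) := by
      omega
    rw [hidxbhat, hidxahat, he1, he2]
    linarith
  · -- z is below xstar
    have hzl₂ : z ∈ l₂ := by
      have hzv2 : z ∈ v := hzv
      rw [hveq] at hzv2
      simp only [List.mem_append, List.mem_cons] at hzv2
      tauto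
    have hidxb : v.idxOf z = l₁.length + 1 + List.idxOf z l₂ := by
      rw [hveq]; exact idx_right hzl₁ hzx
    have hidxbhat : (insertBelow xstar ys v).idxOf z
        = l₁.length + 1 + List.idxOf z l₂ + ys.length := by
      rw [hins ys, idx_right hzl₁ hzx, List.idxOf_append_of_notMem hzys]
      omega
    have hulen : List.countP (fun a => !p a) (v'.take (v'.idxOf z)) ≤ ys.length := by
      have h1 : List.countP (fun a => !p a) (v'.take (v'.idxOf z))
          ≤ List.countP (fun a => !p a) v' :=
        List.Sublist.countP_le (List.take_sublist _ _)
      have h2 : List.countP (fun a => !p a) v'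
          = (v'.filter (fun a => !p a)).length := List.countP_eq_length_filter
      have h3 : (v'.filter (fun a => !p a)).length = ys.length := by
        apply nodup_len_eq (List.Nodup.filter _ hv'nd) hnd
        intro c
        simp only [List.mem_filter, hp, Bool.not_eq_true', decide_eq_false_iff_not]
        constructor
        · rintro ⟨hc1, hc2⟩
          have hm := (hv'mem c).mp hc1
          rw [Finset.mem_union] at hm
          rcases hm with h | h
          · exact absurd h hc2
          · exact (hys c).mpr h
        · intro hc
          have hcY := (hys c).mp hc
          exact ⟨(hv'mem c).mpr (Finset.mem_union_right _ hcY),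
            Finset.disjoint_right.mp hXY hcY⟩
      omega
    have hm1 : s (v'.idxOf xstar) ≤ s l₁.length := by
      rw [hsplitx]; exact s_mono s hmono (by omega)
    have he2 : v'.idxOf z = l₁.length + 1 + List.idxOf z l₂
        + List.countP (fun a => !p a) (v'.take (v'.idxOf z)) := by
      omega
    have hm2 : s (l₁.length + 1 + List.idxOf z l₂ + ys.length) ≤ s (v'.idxOf z) := by
      rw [he2]
      exact s_mono s hmono (by omega)
    rw [hidxbhat, hidxahat]
    linarith

/-- For a scoring vector with convex differences toward the top, `xstar` is a possible
cowinner w.r.t. adding the candidates of `Y` iff `xstar` is a cowinner in the specific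
extension obtained by inserting the new candidates right below `xstar` in every vote. -/
theorem stmt_4 (s : ℕ → ℤ) (hmono : ∀ i, s (i + 1) ≤ s i)
    (hconv : ∀ i, s i - s (i + 1) ≤ s (i + 1) - s (i + 2))
    (X Y : Finset ℕ) (hXY : Disjoint X Y) (k : ℕ) (hcard : Y.card = k)
    (P : Profile) (hP : IsProfile X P) (xstar : ℕ) (hx : xstar ∈ X)
    (ys : List ℕ) (hnd : ys.Nodup) (hys : ∀ c, c ∈ ys ↔ c ∈ Y) :
    (∃ P', IsProfile (X ∪ Y) P' ∧ Extends X P' P ∧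
        ∀ z ∈ X ∪ Y, score s P' z ≤ score s P' xstar) ↔
      (∀ z ∈ X ∪ Y,
        score s (insertProfile xstar ys P) z ≤ score s (insertProfile xstar ys P) xstar) := by
  constructor
  · -- forward: some extension works → canonical extension works
    rintro ⟨P', hP'prof, hext, hwin⟩ z hzXY
    have hPeq : P = P'.map (fun v => v.filter (fun c => decide (c ∈ X))) := by
      rw [← hext]; rfl
    rw [Finset.mem_union] at hzXY
    rcases hzXY with hzX | hzY
    · -- z ∈ X : use convexity comparison with P'
      have hscoreP' : score s P' z ≤ score s P' xstar :=
        hwin z (Finset.mem_union_left _ hzX)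
      have hhat : insertProfile xstar ys P
          = P'.map (fun v' => insertBelow xstar ys
              (v'.filter (fun c => decide (c ∈ X)))) := by
        rw [hPeq]
        simp [insertProfile, List.map_map, Function.comp]
      have hkey : score s (insertProfile xstar ys P) z + score s P' xstar
          ≤ score s (insertProfile xstar ys P) xstar + score s P' z := by
        rw [hhat]
        unfold score
        rw [List.map_map, List.map_map, ← List.sum_map_add, ← List.sum_map_add]
        apply List.sum_le_sum
        intro v' hv'
        exact pervote s hmono hconv X Y hXY xstar hx ys hnd hys v'
          (hP'prof v' hv') z hzX
      linarith
    · -- z ∈ Y : z is always right below xstar in the canonical extension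
      have hzys : z ∈ ys := (hys z).mpr hzY
      unfold score insertProfile
      rw [List.map_map, List.map_map]
      apply List.sum_le_sum
      intro v hv
      obtain ⟨hvnd, hvmem⟩ := hP v hv
      have hxv : xstar ∈ v := (hvmem xstar).mpr hx
      obtain ⟨l₁, l₂, hveq, hxl₁, hins⟩ := decomp hxv
      have hzX' : z ∉ X := Finset.disjoint_right.mp hXY hzY
      have hzl₁ : z ∉ l₁ := fun hc => hzX' ((hvmem z).mp (by rw [hveq]; simp [hc]))
      have hzx : z ≠ xstar := fun hc => hzX' (hc ▸ hx)
      simp only [Function.comp]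
      rw [hins ys, idx_self hxl₁, idx_right hzl₁ hzx]
      exact s_mono s hmono (by omega)
  · -- backward: canonical extension is a valid extension
    intro hwin
    refine ⟨insertProfile xstar ys P, ?_, ?_, hwin⟩
    · intro v hv
      unfold insertProfile at hv
      rw [List.mem_map] at hv
      obtain ⟨w, hw, rfl⟩ := hv
      exact (hat_vote X Y hXY xstar hx ys hnd hys (hP w hw)).1
    · unfold Extends restrict insertProfile
      rw [List.map_map]
      conv_rhs => rw [← List.map_id P]
      apply List.map_congr_left
      intro v hv
      exact (hat_vote X Y hXY xstar hx ys hnd hys (hP v hv)).2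

end PcWNC
end

section
/- Let P be an n-voter profile over X and x* ∈ X. Then x* is a possible cowinner for the Borda rule with respect to the addition of k ≥ 1 new candidates if and only if for every z ∈ X \ {x*}: k · N_P(x*, z) ≥ S_B(z, P) − S_B(x*, P), where N_P(x*, z) is the number of votes ranking x* above z and S_B denotes the Borda score in P. -/
namespace PcWNC

-- === helper lemmas ===

def contrib (v : List ℕ) (x : ℕ) : ℕ :=
  v.countP (fun w => decide (v.idxOf x < v.idxOf w))

lemma indexOf_split (a b : List ℕ) (x : ℕ) (hxa : x ∉ a) :
    (a ++ x :: b).idxOf x = a.length := by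
  rw [List.idxOf_append_of_notMem hxa, List.idxOf_cons_self]; omega

lemma indexOf_split_lt (a b : List ℕ) (x z : ℕ) (hxa : x ∉ a)
    (hnd : (a ++ x :: b).Nodup) (hz : z ∈ a ++ x :: b) :
    ((a ++ x :: b).idxOf x < (a ++ x :: b).idxOf z) ↔ z ∈ b := by
  rw [indexOf_split a b x hxa]
  rcases List.mem_append.1 hz with h | h
  · simp only [List.idxOf_append_of_mem h]
    have := List.idxOf_lt_length_iff.2 h
    constructor
    · omega
    · intro hb
      exfalso
      rw [List.nodup_append] at hnd
      exact hnd.2.2 _ h _ (List.mem_cons_of_mem _ hb) rfl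
  · rcases List.mem_cons.1 h with rfl | hb
    · simp only [List.idxOf_append_of_notMem hxa, List.idxOf_cons_self, add_zero,
        lt_self_iff_false, false_iff]
      rw [List.nodup_append] at hnd
      intro hb; exact (List.nodup_cons.1 hnd.2.1).1 hb
    · have hza : z ∉ a := by
        rw [List.nodup_append] at hnd
        intro hza; exact hnd.2.2 _ hza _ h rfl
      have hzx : x ≠ z := by
        rw [List.nodup_append] at hnd
        intro e; exact (List.nodup_cons.1 hnd.2.1).1 (e ▸ hb)
      rw [List.idxOf_append_of_notMem hza, List.idxOf_cons_ne _ hzx]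
      simp [hb]

lemma contrib_split (a b : List ℕ) (x : ℕ) (hnd : (a ++ x :: b).Nodup) :
    contrib (a ++ x :: b) x = b.length := by
  have hxa : x ∉ a := by
    rw [List.nodup_append] at hnd
    intro hxa; exact hnd.2.2 _ hxa _ List.mem_cons_self rfl
  unfold contrib
  rw [List.countP_append, List.countP_cons]
  have h0 : (a.countP fun w => decide ((a ++ x :: b).idxOf x < (a ++ x :: b).idxOf w)) = 0 := by
    rw [List.countP_eq_zero]
    intro w hw
    simp only [decide_eq_true_eq, not_lt]
    have := (indexOf_split_lt a b x w hxa hnd (by simp [hw])).not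
    simp only [not_lt] at this
    apply this.2
    rw [List.nodup_append] at hnd
    intro hwb; exact hnd.2.2 _ hw _ (List.mem_cons_of_mem _ hwb) rfl
  have h1 : (b.countP fun w => decide ((a ++ x :: b).idxOf x < (a ++ x :: b).idxOf w)) = b.length := by
    rw [List.countP_eq_length]
    intro w hw
    simp only [decide_eq_true_eq]
    exact (indexOf_split_lt a b x w hxa hnd (by simp [hw])).2 hw
  rw [h0, h1]
  simp

lemma countP_le_card (b : List ℕ) (Y : Finset ℕ) (hnd : b.Nodup) (p : ℕ → Bool)
    (h : ∀ w ∈ b, p w = true → w ∈ Y) : b.countP p ≤ Y.card := by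
  have h1 : b.countP p = (b.filter p).length := List.countP_eq_length_filter
  have h2 : (b.filter p).Nodup := hnd.filter p
  rw [h1, ← List.toFinset_card_of_nodup h2]
  apply Finset.card_le_card
  intro w hw
  rw [List.mem_toFinset, List.mem_filter] at hw
  exact h w hw.1 hw.2

lemma sum_map_ite {α : Type} (l : List α) (p : α → Bool) (c : ℕ) :
    (l.map (fun i => if p i then c else 0)).sum = c * l.countP p := by
  induction l with
  | nil => simp
  | cons a t ih =>
    rw [List.map_cons, List.sum_cons, ih, List.countP_cons]
    by_cases h : p a <;> simp [h] <;> ring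

lemma dropWhile_ne (v : List ℕ) (x : ℕ) (hx : x ∈ v) :
    ∃ b, v.dropWhile (fun c => decide (c ≠ x)) = x :: b := by
  induction v with
  | nil => simp at hx
  | cons a t ih =>
    by_cases h : a = x
    · subst h
      exact ⟨t, by simp [List.dropWhile]⟩
    · rcases List.mem_cons.1 hx with rfl | ht
      · exact absurd rfl h
      · rcases ih ht with ⟨b, hb⟩
        refine ⟨b, ?_⟩
        rw [List.dropWhile_cons, if_pos (by simpa using h)]
        exact hb
lemma filter_mem_split (X : Finset ℕ) (a b : List ℕ) (x : ℕ) (hx : x ∈ X) :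
    (a ++ x :: b).filter (fun c => decide (c ∈ X)) =
      a.filter (fun c => decide (c ∈ X)) ++ x :: b.filter (fun c => decide (c ∈ X)) := by
  rw [List.filter_append, List.filter_cons]
  simp [hx]

lemma key_fwd (X Y : Finset ℕ) (k : ℕ) (hk : Y.card = k) (v' : List ℕ)
    (hnd : v'.Nodup) (hmem : ∀ c, c ∈ v' ↔ c ∈ X ∪ Y)
    (x z : ℕ) (hx : x ∈ X) (hz : z ∈ X) (hzx : z ≠ x) :
    contrib (v'.filter (fun c => decide (c ∈ X))) z + contrib v' x ≤
    contrib v' z + contrib (v'.filter (fun c => decide (c ∈ X))) x +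
      (if (v'.filter (fun c => decide (c ∈ X))).idxOf x <
          (v'.filter (fun c => decide (c ∈ X))).idxOf z then k else 0) := by
  set p : ℕ → Bool := fun c => decide (c ∈ X) with hp
  have hxv : x ∈ v' := (hmem x).2 (Finset.mem_union_left _ hx)
  have hzv : z ∈ v' := (hmem z).2 (Finset.mem_union_left _ hz)
  obtain ⟨a, b, hab⟩ := List.append_of_mem hxv
  subst hab
  have hndv : ((a ++ x :: b).filter p).Nodup := hnd.filter p
  have hxa : x ∉ a := by
    rw [List.nodup_append] at hnd
    exact fun h => hnd.2.2 _ h _ List.mem_cons_self rfl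
  have hfv : (a ++ x :: b).filter p = a.filter p ++ x :: b.filter p :=
    filter_mem_split X a b x hx
  have hxfa : x ∉ a.filter p := fun h => hxa (List.mem_of_mem_filter h)
  have hndv' : (a.filter p ++ x :: b.filter p).Nodup := hfv ▸ hndv
  have hcvx : contrib ((a ++ x :: b).filter p) x = (b.filter p).length := by
    rw [hfv]; exact contrib_split _ _ _ hndv'
  have hcv'x : contrib (a ++ x :: b) x = b.length := contrib_split a b x hnd
  have hflen : (b.filter p).length = b.countP p := by
    rw [List.countP_eq_length_filter]
  have hbk : b.length ≤ b.countP p + k := by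
    have := List.length_eq_countP_add_countP p (l := b)
    have hle : (b.countP fun c => decide ¬p c = true) ≤ Y.card := by
      apply countP_le_card _ _ ((List.nodup_append.1 hnd).2.1.of_cons) _
      intro w hw hpw
      simp only [hp, decide_eq_true_eq, decide_not, Bool.not_eq_true', decide_eq_false_iff_not] at hpw
      have : w ∈ X ∪ Y := (hmem w).1 (by simp [hw])
      rcases Finset.mem_union.1 this with h | h
      · exact absurd h hpw
      · exact h
    omega
  by_cases hzb : z ∈ b
  · -- x above z
    have hind : ((a ++ x :: b).filter p).idxOf x < ((a ++ x :: b).filter p).idxOf z := by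
      rw [hfv]
      apply (indexOf_split_lt _ _ _ _ hxfa hndv' _).2
      · exact List.mem_filter.2 ⟨hzb, by simp [hp, hz]⟩
      · refine List.mem_append.2 (Or.inr ?_)
        exact List.mem_cons_of_mem _ (List.mem_filter.2 ⟨hzb, by simp [hp, hz]⟩)
    rw [if_pos hind]
    obtain ⟨b1, b2, hb⟩ := List.append_of_mem hzb
    subst hb
    have e1 : a ++ x :: (b1 ++ z :: b2) = (a ++ x :: b1) ++ z :: b2 := by simp
    have hcv'z : contrib (a ++ x :: (b1 ++ z :: b2)) z = b2.length := by
      rw [e1]; exact contrib_split _ _ _ (e1 ▸ hnd)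
    have e2 : (a ++ x :: (b1 ++ z :: b2)).filter p =
        (a.filter p ++ x :: b1.filter p) ++ z :: b2.filter p := by
      rw [hfv, List.filter_append, List.filter_cons]
      simp [hp, hz]
    have hcvz : contrib ((a ++ x :: (b1 ++ z :: b2)).filter p) z = (b2.filter p).length := by
      rw [e2]; exact contrib_split _ _ _ (e2 ▸ hndv)
    have hle2 : (b2.filter p).length ≤ b2.length := List.length_filter_le _ _
    rw [hcvz, hcv'x, hcv'z, hcvx, hflen]
    have : (b1 ++ z :: b2).length = b1.length + 1 + b2.length := by simp; omega
    have h3 : (b1 ++ z :: b2).countP p = b1.countP p + 1 + b2.countP p := by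
      rw [List.countP_append, List.countP_cons]
      simp [hp, hz]; omega
    have h4 : b1.countP p ≤ b1.length := List.countP_le_length
    have h5 : b2.countP p ≤ b2.length := List.countP_le_length
    omega
  · -- z above x
    have hza : z ∈ a := by
      rcases List.mem_append.1 hzv with h | h
      · exact h
      · rcases List.mem_cons.1 h with rfl | h
        · exact absurd rfl hzx
        · exact absurd h hzb
    have hind : ¬ ((a ++ x :: b).filter p).idxOf x < ((a ++ x :: b).filter p).idxOf z := by
      rw [hfv]
      rw [indexOf_split_lt _ _ _ _ hxfa hndv'
        (by exact List.mem_append.2 (Or.inl (List.mem_filter.2 ⟨hza, by simp [hp, hz]⟩)))]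
      intro h
      exact hzb (List.mem_of_mem_filter h)
    rw [if_neg hind, add_zero]
    obtain ⟨a1, a2, ha⟩ := List.append_of_mem hza
    subst ha
    have e1 : (a1 ++ z :: a2) ++ x :: b = a1 ++ z :: (a2 ++ x :: b) := by simp
    have hcv'z : contrib ((a1 ++ z :: a2) ++ x :: b) z = (a2 ++ x :: b).length := by
      rw [e1]; exact contrib_split _ _ _ (e1 ▸ hnd)
    have e2 : ((a1 ++ z :: a2) ++ x :: b).filter p =
        a1.filter p ++ z :: (a2.filter p ++ x :: b.filter p) := by
      rw [hfv, List.filter_append, List.filter_cons]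
      simp [hp, hz]
    have hcvz : contrib (((a1 ++ z :: a2) ++ x :: b).filter p) z =
        (a2.filter p ++ x :: b.filter p).length := by
      rw [e2]; exact contrib_split _ _ _ (e2 ▸ hndv)
    rw [hcvz, hcv'x, hcv'z, hcvx]
    have h1 : (a2.filter p).length ≤ a2.length := List.length_filter_le _ _
    simp only [List.length_append, List.length_cons]
    omega


lemma insertBelow_decomp (x : ℕ) (ys v : List ℕ) (hx : x ∈ v) :
    ∃ a b, v = a ++ x :: b ∧ insertBelow x ys v = a ++ x :: (ys ++ b) := by
  obtain ⟨b, hb⟩ := dropWhile_ne v x hx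
  refine ⟨v.takeWhile (fun c => decide (c ≠ x)), b, ?_, ?_⟩
  · conv_lhs => rw [← List.takeWhile_append_dropWhile (p := fun c => decide (c ≠ x)) (l := v)]
    rw [hb]
  · unfold insertBelow
    rw [hb]
    simp

lemma insertBelow_nodup (x : ℕ) (ys v a b : List ℕ) (hv : v = a ++ x :: b)
    (hvnd : v.Nodup) (hys : ys.Nodup) (hdisj : ∀ y ∈ ys, y ∉ v) :
    (a ++ x :: (ys ++ b)).Nodup := by
  subst hv
  rw [List.nodup_append] at hvnd ⊢
  rw [List.nodup_cons] at hvnd ⊢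
  refine ⟨hvnd.1, ⟨?_, ?_⟩, ?_⟩
  · simp only [List.mem_append]
    rintro (h | h)
    · exact hdisj x h (by simp)
    · exact hvnd.2.1.1 h
  · rw [List.nodup_append]
    refine ⟨hys, hvnd.2.1.2, ?_⟩
    intro y hy c hc hyc
    exact hdisj y hy (by simp [hyc, hc])
  · intro c hc d hd hcd
    simp only [List.mem_cons, List.mem_append] at hd
    rcases hd with hdx | hcy | hcb
    · exact hvnd.2.2 _ hc _ List.mem_cons_self (hcd.trans hdx)
    · exact hdisj d hcy (by simp [← hcd, hc])
    · exact hvnd.2.2 _ hc _ (List.mem_cons_of_mem _ hcb) hcd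

lemma insertBelow_mem (x : ℕ) (ys v a b : List ℕ) (hv : v = a ++ x :: b) (c : ℕ) :
    c ∈ a ++ x :: (ys ++ b) ↔ c ∈ v ∨ c ∈ ys := by
  subst hv
  simp only [List.mem_append, List.mem_cons]
  tauto

lemma insertBelow_filter (X : Finset ℕ) (x : ℕ) (ys v a b : List ℕ) (hv : v = a ++ x :: b)
    (hvX : ∀ c, c ∈ v → c ∈ X) (hdisj : ∀ y ∈ ys, y ∉ X) :
    (a ++ x :: (ys ++ b)).filter (fun c => decide (c ∈ X)) = v := by
  have hxX : x ∈ X := hvX x (hv ▸ (by simp))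
  rw [List.filter_append, List.filter_cons, List.filter_append]
  have ha : a.filter (fun c => decide (c ∈ X)) = a :=
    List.filter_eq_self.2 (fun c hc => by simp [hvX c (hv ▸ (by simp [hc]))])
  have hb : b.filter (fun c => decide (c ∈ X)) = b :=
    List.filter_eq_self.2 (fun c hc => by simp [hvX c (hv ▸ (by simp [hc]))])
  have hy : ys.filter (fun c => decide (c ∈ X)) = [] :=
    List.filter_eq_nil_iff.2 (fun c hc => by simp [hdisj c hc])
  rw [ha, hb, hy]
  simp [hxX, hv]

lemma insertBelow_contrib_x (x : ℕ) (ys v a b : List ℕ) (hv : v = a ++ x :: b)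
    (hnd' : (a ++ x :: (ys ++ b)).Nodup) (hvnd : v.Nodup) :
    contrib (a ++ x :: (ys ++ b)) x = contrib v x + ys.length := by
  rw [contrib_split _ _ _ hnd', hv, contrib_split _ _ _ (hv ▸ hvnd)]
  simp [Nat.add_comm]

lemma insertBelow_contrib_z (x z : ℕ) (ys v a b : List ℕ) (hv : v = a ++ x :: b)
    (hnd' : (a ++ x :: (ys ++ b)).Nodup) (hvnd : v.Nodup)
    (hzv : z ∈ v) (hzx : z ≠ x) :
    contrib (a ++ x :: (ys ++ b)) z =
      contrib v z + (if v.idxOf x < v.idxOf z then 0 else ys.length) := by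
  have hxa : x ∉ a := by
    have h := hv ▸ hvnd
    rw [List.nodup_append] at h
    exact fun hm => h.2.2 _ hm _ List.mem_cons_self rfl
  have hiff := indexOf_split_lt a b x z hxa (hv ▸ hvnd) (hv ▸ hzv)
  by_cases hzb : z ∈ b
  · rw [if_pos (by rw [hv]; exact hiff.2 hzb), add_zero]
    obtain ⟨b1, b2, hb⟩ := List.append_of_mem hzb
    subst hb
    have e1 : a ++ x :: (ys ++ (b1 ++ z :: b2)) = (a ++ x :: (ys ++ b1)) ++ z :: b2 := by simp
    have e2 : a ++ x :: (b1 ++ z :: b2) = (a ++ x :: b1) ++ z :: b2 := by simp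
    rw [e1, contrib_split _ _ _ (e1 ▸ hnd'), hv, e2, contrib_split _ _ _ (e2 ▸ (hv ▸ hvnd))]
  · have hza : z ∈ a := by
      rcases List.mem_append.1 (hv ▸ hzv) with h | h
      · exact h
      · rcases List.mem_cons.1 h with rfl | h
        · exact absurd rfl hzx
        · exact absurd h hzb
    rw [if_neg (by rw [hv]; exact fun h => hzb (hiff.1 h))]
    obtain ⟨a1, a2, ha⟩ := List.append_of_mem hza
    subst ha
    have e1 : (a1 ++ z :: a2) ++ x :: (ys ++ b) = a1 ++ z :: (a2 ++ x :: (ys ++ b)) := by simp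
    have e2 : (a1 ++ z :: a2) ++ x :: b = a1 ++ z :: (a2 ++ x :: b) := by simp
    rw [e1, contrib_split _ _ _ (e1 ▸ hnd'), hv, e2, contrib_split _ _ _ (e2 ▸ (hv ▸ hvnd))]
    simp
    omega

lemma insertBelow_contrib_y (x y : ℕ) (ys v a b : List ℕ) (hv : v = a ++ x :: b)
    (hnd' : (a ++ x :: (ys ++ b)).Nodup) (hy : y ∈ ys) :
    contrib (a ++ x :: (ys ++ b)) y ≤ contrib (a ++ x :: (ys ++ b)) x := by
  rw [contrib_split _ _ _ hnd']
  obtain ⟨y1, y2, hys⟩ := List.append_of_mem hy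
  subst hys
  have e1 : a ++ x :: ((y1 ++ y :: y2) ++ b) = (a ++ x :: y1) ++ y :: (y2 ++ b) := by simp
  rw [e1, contrib_split _ _ _ (e1 ▸ hnd')]
  simp
  omega

lemma sum_map_const {α : Type} (l : List α) (c : ℕ) :
    (l.map (fun _ => c)).sum = c * l.length := by
  induction l with
  | nil => simp
  | cons a t ih => simp [ih]; ring

lemma sum_map_ite0 {α : Type} (l : List α) (p : α → Bool) (c : ℕ) :
    (l.map (fun i => if p i then 0 else c)).sum = c * (l.length - l.countP p) := by
  induction l with
  | nil => simp
  | cons a t ih =>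
    have hle : t.countP p ≤ t.length := List.countP_le_length
    rw [List.map_cons, List.sum_cons, ih, List.countP_cons]
    by_cases h : p a
    · simp only [h, if_true, List.length_cons]
      have : t.length + 1 - (t.countP p + 1) = t.length - t.countP p := by omega
      simp [this]
    · have h2 : p a = false := by simpa using h
      simp only [h2, Bool.false_eq_true, if_false, List.length_cons, add_zero]
      have : t.length + 1 - t.countP p = (t.length - t.countP p) + 1 := by omega
      rw [this, Nat.mul_add, Nat.mul_one]
      omega

lemma borda_contrib (P : Profile) (x : ℕ) :
    borda P x = (P.map (fun v => contrib v x)).sum := rfl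

lemma borda_map (P : Profile) (g : List ℕ → List ℕ) (w : ℕ) :
    borda (P.map g) w = (P.map (fun v => contrib (g v) w)).sum := by
  rw [borda_contrib, List.map_map]; rfl

/-- Borda characterization of possible cowinners w.r.t. adding `k` new candidates. -/
theorem stmt_5 (X : Finset ℕ) (P : Profile) (hP : IsProfile X P)
    (xstar : ℕ) (hx : xstar ∈ X) (k : ℕ) (hk : 1 ≤ k) :
    (∃ Y : Finset ℕ, Disjoint X Y ∧ Y.card = k ∧
      ∃ P', IsProfile (X ∪ Y) P' ∧ Extends X P' P ∧
        ∀ z ∈ X ∪ Y, borda P' z ≤ borda P' xstar) ↔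
      ∀ z ∈ X, z ≠ xstar →
        (borda P z : ℤ) - (borda P xstar : ℤ) ≤ (k : ℤ) * (nAbove P xstar z : ℤ) := by
  constructor
  · rintro ⟨Y, hdisjXY, hcard, P', hP', hext, hwin⟩
    intro z hzX hzx
    have hPeq : P = P'.map (fun v => v.filter (fun c => decide (c ∈ X))) := hext.symm
    set pr : List ℕ → Bool :=
      fun v => decide (xstar ∈ v ∧ z ∈ v ∧ v.idxOf xstar < v.idxOf z) with hpr
    have hkey : ∀ v' ∈ P',
        contrib (v'.filter (fun c => decide (c ∈ X))) z + contrib v' xstar ≤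
        contrib v' z + (contrib (v'.filter (fun c => decide (c ∈ X))) xstar +
          (if pr (v'.filter (fun c => decide (c ∈ X))) then k else 0)) := by
      intro v' hv'
      obtain ⟨hnd, hmem⟩ := hP' v' hv'
      have hfvP : v'.filter (fun c => decide (c ∈ X)) ∈ P := by
        rw [hPeq]
        exact List.mem_map_of_mem (f := fun v => v.filter (fun c => decide (c ∈ X))) hv'
      obtain ⟨hndf, hmemf⟩ := hP _ hfvP
      have hxs : xstar ∈ v'.filter (fun c => decide (c ∈ X)) := (hmemf xstar).2 hx
      have hzf : z ∈ v'.filter (fun c => decide (c ∈ X)) := (hmemf z).2 hzX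
      have hiff : (pr (v'.filter (fun c => decide (c ∈ X))) = true) ↔
          ((v'.filter (fun c => decide (c ∈ X))).idxOf xstar <
            (v'.filter (fun c => decide (c ∈ X))).idxOf z) := by
        simp [hpr, hxs, hzf]
      have hkf := key_fwd X Y k hcard v' hnd hmem xstar z hx hzX hzx
      rcases Classical.em ((v'.filter (fun c => decide (c ∈ X))).idxOf xstar <
          (v'.filter (fun c => decide (c ∈ X))).idxOf z) with hc | hc
      · rw [if_pos (hiff.2 hc)]; rw [if_pos hc] at hkf; omega
      · rw [if_neg (fun hh => hc (hiff.1 hh))]; rw [if_neg hc] at hkf; omega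
    have hsum := List.sum_le_sum hkey
    rw [List.sum_map_add, List.sum_map_add, List.sum_map_add, sum_map_ite] at hsum
    have e1 : (P'.map (fun v' => contrib (v'.filter (fun c => decide (c ∈ X))) z)).sum
        = borda P z := by
      rw [hPeq, borda_contrib, List.map_map]; rfl
    have e2 : (P'.map (fun v' => contrib (v'.filter (fun c => decide (c ∈ X))) xstar)).sum
        = borda P xstar := by
      rw [hPeq, borda_contrib, List.map_map]; rfl
    have e3 : (P'.map (fun v' => contrib v' xstar)).sum = borda P' xstar := rfl
    have e4 : (P'.map (fun v' => contrib v' z)).sum = borda P' z := rfl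
    have e5 : P'.countP (fun v' => pr (v'.filter (fun c => decide (c ∈ X))))
        = nAbove P xstar z := by
      rw [nAbove, hPeq, List.countP_map]; rfl
    rw [e1, e2, e3, e4, e5] at hsum
    have hw := hwin z (Finset.mem_union_left _ hzX)
    have hN : borda P z ≤ borda P xstar + k * nAbove P xstar z := by omega
    have hZ : (borda P z : ℤ) ≤ (borda P xstar : ℤ) + (k : ℤ) * (nAbove P xstar z : ℤ) := by
      exact_mod_cast hN
    linarith
  · intro h
    classical
    set m := X.sup id + 1 with hm
    set ys : List ℕ := (List.range k).map (fun i => m + i) with hys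
    have hysnd : ys.Nodup := by
      exact List.Nodup.map (add_right_injective m) (List.nodup_range (n := k))
    have hyslen : ys.length = k := by simp [hys]
    have hyX : ∀ y ∈ ys, y ∉ X := by
      intro y hy hyXmem
      have h1 : id y ≤ X.sup id := Finset.le_sup (f := id) hyXmem
      simp only [hys, List.mem_map, List.mem_range] at hy
      obtain ⟨i, hi, rfl⟩ := hy
      simp only [id] at h1
      omega
    set Y := ys.toFinset with hY
    have hdisj : Disjoint X Y := by
      rw [Finset.disjoint_left]
      intro a haX haY
      exact hyX a (List.mem_toFinset.1 haY) haX
    have hcard : Y.card = k := by rw [hY, List.toFinset_card_of_nodup hysnd, hyslen]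
    have hvfact : ∀ v ∈ P, ∃ a b, v = a ++ xstar :: b ∧
        insertBelow xstar ys v = a ++ xstar :: (ys ++ b) := by
      intro v hv
      exact insertBelow_decomp xstar ys v (((hP v hv).2 xstar).2 hx)
    refine ⟨Y, hdisj, hcard, insertProfile xstar ys P, ?_, ?_, ?_⟩
    · -- IsProfile
      intro v' hv'
      obtain ⟨v, hvP, rfl⟩ := List.mem_map.1 hv'
      obtain ⟨a, b, hvab, hins⟩ := hvfact v hvP
      obtain ⟨hvnd, hvX⟩ := hP v hvP
      have hdv : ∀ y ∈ ys, y ∉ v := fun y hy hyv => hyX y hy ((hvX y).1 hyv)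
      rw [hins]
      refine ⟨insertBelow_nodup xstar ys v a b hvab hvnd hysnd hdv, ?_⟩
      intro c
      rw [insertBelow_mem xstar ys v a b hvab c, Finset.mem_union, hvX c, hY,
        List.mem_toFinset]
    · -- Extends
      unfold Extends restrict insertProfile
      rw [List.map_map]
      conv_rhs => rw [← List.map_id P]
      apply List.map_congr_left
      intro v hv
      obtain ⟨a, b, hvab, hins⟩ := hvfact v hv
      obtain ⟨hvnd, hvX⟩ := hP v hv
      simp only [Function.comp, hins, id]
      exact insertBelow_filter X xstar ys v a b hvab (fun c hc => (hvX c).1 hc) hyX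
    · -- score condition
      intro z hzXY
      have hbx : borda (insertProfile xstar ys P) xstar = borda P xstar + k * P.length := by
        rw [insertProfile, borda_map]
        have hc : ∀ v ∈ P, contrib (insertBelow xstar ys v) xstar
            = contrib v xstar + k := by
          intro v hv
          obtain ⟨a, b, hvab, hins⟩ := hvfact v hv
          obtain ⟨hvnd, hvX⟩ := hP v hv
          have hdv : ∀ y ∈ ys, y ∉ v := fun y hy hyv => hyX y hy ((hvX y).1 hyv)
          rw [hins, insertBelow_contrib_x xstar ys v a b hvab
            (insertBelow_nodup xstar ys v a b hvab hvnd hysnd hdv) hvnd, hyslen]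
        rw [List.map_congr_left hc, List.sum_map_add, sum_map_const, ← borda_contrib]
      rcases Finset.mem_union.1 hzXY with hzX | hzY
      · by_cases hzx : z = xstar
        · subst hzx; exact le_refl _
        · -- z ∈ X, z ≠ xstar
          set pr0 : List ℕ → Bool := fun v => decide (v.idxOf xstar < v.idxOf z) with hpr0
          have hbz : borda (insertProfile xstar ys P) z
              = borda P z + k * (P.length - P.countP pr0) := by
            rw [insertProfile, borda_map]
            have hc : ∀ v ∈ P, contrib (insertBelow xstar ys v) z
                = contrib v z + (if pr0 v then 0 else k) := by
              intro v hv
              obtain ⟨a, b, hvab, hins⟩ := hvfact v hv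
              obtain ⟨hvnd, hvX⟩ := hP v hv
              have hdv : ∀ y ∈ ys, y ∉ v := fun y hy hyv => hyX y hy ((hvX y).1 hyv)
              rw [hins, insertBelow_contrib_z xstar z ys v a b hvab
                (insertBelow_nodup xstar ys v a b hvab hvnd hysnd hdv) hvnd
                ((hvX z).2 hzX) hzx, hyslen]
              congr 1
              by_cases hcond : v.idxOf xstar < v.idxOf z
              · rw [if_pos hcond, if_pos (by simp [hpr0, hcond])]
              · rw [if_neg hcond, if_neg (by simp [hpr0, hcond])]
            rw [List.map_congr_left hc, List.sum_map_add, sum_map_ite0, ← borda_contrib]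
          have hnab : nAbove P xstar z = P.countP pr0 := by
            apply List.countP_congr
            intro v hv
            obtain ⟨hvnd, hvX⟩ := hP v hv
            simp [hpr0, (hvX xstar).2 hx, (hvX z).2 hzX]
          have hN : borda P z ≤ borda P xstar + k * nAbove P xstar z := by
            have hZ := h z hzX hzx
            have hZ2 : (borda P z : ℤ) ≤ (borda P xstar : ℤ)
                + (k : ℤ) * (nAbove P xstar z : ℤ) := by linarith
            exact_mod_cast hZ2
          rw [hnab] at hN
          have hA : P.countP pr0 ≤ P.length := List.countP_le_length
          have hmul : k * (P.length - P.countP pr0) + k * P.countP pr0 = k * P.length := by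
            rw [← Nat.mul_add]
            congr 1
            omega
          rw [hbz, hbx]
          omega
      · -- z ∈ Y
        rw [hbx, insertProfile, borda_map]
        have hle : ∀ v ∈ P, contrib (insertBelow xstar ys v) z ≤ contrib v xstar + k := by
          intro v hv
          obtain ⟨a, b, hvab, hins⟩ := hvfact v hv
          obtain ⟨hvnd, hvX⟩ := hP v hv
          have hdv : ∀ y ∈ ys, y ∉ v := fun y hy hyv => hyX y hy ((hvX y).1 hyv)
          have hnd' := insertBelow_nodup xstar ys v a b hvab hvnd hysnd hdv
          have h1 := insertBelow_contrib_y xstar z ys v a b hvab hnd'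
            (List.mem_toFinset.1 hzY)
          have h2 := insertBelow_contrib_x xstar ys v a b hvab hnd' hvnd
          rw [hins]
          omega
        calc (P.map (fun v => contrib (insertBelow xstar ys v) z)).sum
            ≤ (P.map (fun v => contrib v xstar + k)).sum := List.sum_le_sum hle
          _ = borda P xstar + k * P.length := by
              rw [List.sum_map_add, sum_map_const, ← borda_contrib]
end PcWNC
end

section
/- In a Borda possible-cowinner situation with addition of new candidates, if candidate x is dominated by some candidate z (i.e., every vote in P ranks z above x), then x is not a possible cowinner for Borda with respect to the addition of any number k of new candidates. -/
namespace PcWNC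

lemma countP_lt {l : List ℕ} {p q : ℕ → Bool}
    (h : ∀ w ∈ l, p w = true → q w = true)
    {a : ℕ} (ha : a ∈ l) (hqa : q a = true) (hpa : p a = false) :
    l.countP p < l.countP q := by
  have h1 : l.filter p = (l.filter q).filter p := by
    rw [List.filter_filter]
    apply List.filter_congr
    intro w hw
    cases hp : p w with
    | false => simp
    | true => simp [h w hw hp]
  rw [List.countP_eq_length_filter, List.countP_eq_length_filter, h1]
  have hs : ((l.filter q).filter p).Sublist (l.filter q) := List.filter_sublist
  rcases lt_or_eq_of_le hs.length_le with h2 | h2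
  · exact h2
  · exfalso
    have heq := hs.eq_of_length h2
    have hmem : a ∈ l.filter q := List.mem_filter.2 ⟨ha, hqa⟩
    rw [← heq] at hmem
    have := (List.mem_filter.1 hmem).2
    rw [hpa] at this
    exact Bool.false_ne_true this

lemma filter_order (q : ℕ → Bool) :
    ∀ (l : List ℕ) (a b : ℕ), a ∈ l → b ∈ l → q a = true → q b = true →
      (l.filter q).idxOf a < (l.filter q).idxOf b → l.idxOf a < l.idxOf b := by
  intro l
  induction l with
  | nil => intro a b ha; simp at ha
  | cons c t ih =>
    intro a b ha hb hqa hqb h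
    have hab : a ≠ b := by rintro rfl; exact absurd h (lt_irrefl _)
    by_cases hca : c = a
    · subst hca
      have hbt : b ∈ t := by
        rcases List.mem_cons.1 hb with h' | h'
        · exact absurd h'.symm hab
        · exact h'
      rw [List.idxOf_cons_self, List.idxOf_cons_ne _ hab]
      exact Nat.succ_pos _
    · by_cases hcb : c = b
      · subst hcb
        exfalso
        have : (c :: t).filter q = c :: t.filter q := by rw [List.filter_cons_of_pos hqb]
        rw [this, List.idxOf_cons_self] at h
        exact Nat.not_lt_zero _ h
      · have hat : a ∈ t := by
          rcases List.mem_cons.1 ha with h' | h'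
          · exact absurd h'.symm hca
          · exact h'
        have hbt : b ∈ t := by
          rcases List.mem_cons.1 hb with h' | h'
          · exact absurd h'.symm hcb
          · exact h'
        have h' : (t.filter q).idxOf a < (t.filter q).idxOf b := by
          cases hqc : q c with
          | false => rwa [List.filter_cons_of_neg (by simp [hqc])] at h
          | true =>
            rw [List.filter_cons_of_pos hqc, List.idxOf_cons_ne _ hca,
              List.idxOf_cons_ne _ hcb] at h
            exact Nat.lt_of_succ_lt_succ h
        rw [List.idxOf_cons_ne _ hca, List.idxOf_cons_ne _ hcb]
        exact Nat.succ_lt_succ (ih a b hat hbt hqa hqb h')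

lemma sum_lt_sum' {l : List (List ℕ)} {f g : List ℕ → ℕ} (hne : l ≠ [])
    (h : ∀ v ∈ l, f v < g v) : (l.map f).sum < (l.map g).sum := by
  cases l with
  | nil => exact absurd rfl hne
  | cons v t =>
    simp only [List.map_cons, List.sum_cons]
    apply Nat.add_lt_add_of_lt_of_le
    · exact h v (List.mem_cons_self)
    · apply List.sum_le_sum
      intro w hw
      exact le_of_lt (h w (List.mem_cons_of_mem _ hw))

/-- If `x` is dominated by `z` in `P`, then `x` is not a possible Borda cowinner
with respect to the addition of any number of new candidates. -/
theorem stmt_7 (X : Finset ℕ) (P : Profile) (hP : IsProfile X P) (hne : P ≠ [])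
    (x z : ℕ) (hxX : x ∈ X) (hzX : z ∈ X) (hzx : z ≠ x)
    (hdom : ∀ v ∈ P, v.idxOf z < v.idxOf x) (k : ℕ) :
    ¬ ∃ Y : Finset ℕ, Disjoint X Y ∧ Y.card = k ∧
        ∃ P', IsProfile (X ∪ Y) P' ∧ Extends X P' P ∧
          ∀ w ∈ X ∪ Y, borda P' w ≤ borda P' x := by
  rintro ⟨Y, hdisj, hcard, P', hP', hext, hwin⟩
  have hzXY : z ∈ X ∪ Y := Finset.mem_union_left _ hzX
  have hxXY : x ∈ X ∪ Y := Finset.mem_union_left _ hxX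
  have key : ∀ v' ∈ P',
      v'.countP (fun w => decide (v'.idxOf x < v'.idxOf w)) <
      v'.countP (fun w => decide (v'.idxOf z < v'.idxOf w)) := by
    intro v' hv'
    obtain ⟨hnd, hmem⟩ := hP' v' hv'
    have hx' : x ∈ v' := (hmem x).2 hxXY
    have hz' : z ∈ v' := (hmem z).2 hzXY
    have hvP : v'.filter (fun c => decide (c ∈ X)) ∈ P := by
      rw [← hext]; exact List.mem_map_of_mem hv'
    have hd := hdom _ hvP
    have hlt : v'.idxOf z < v'.idxOf x :=
      filter_order _ v' z x hz' hx' (by simp [hzX]) (by simp [hxX]) hd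
    apply countP_lt
    · intro w hw hpw
      simp only [decide_eq_true_eq] at hpw ⊢
      exact lt_trans hlt hpw
    · exact hx'
    · simpa using hlt
    · simp
  have hPne : P' ≠ [] := by
    intro h
    apply hne
    rw [← hext, h]
    rfl
  have hlt : borda P' x < borda P' z := by
    unfold borda
    exact sum_lt_sum' hPne key
  exact absurd (hwin z hzXY) (not_le.2 hlt)
end PcWNC
end

section
/- For the K-approval rule, a candidate x* is a possible cowinner with respect to the addition of an unbounded number of new candidates (i.e., there exists some k and an extension of the profile by k new candidates making x* a cowinner) if and only if S_K(x*, P) ≥ 1, i.e., at least one vote ranks x* within the top K positions. -/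
namespace PcWNC

private lemma mem_take_mono {x : ℕ} {l : List ℕ} {m n : ℕ} (h : m ≤ n)
    (hx : x ∈ l.take m) : x ∈ l.take n := by
  have h1 : l.take m = (l.take n).take m := by
    rw [List.take_take, Nat.min_eq_left h]
  rw [h1] at hx
  exact List.take_subset _ _ hx

private lemma mem_take_filter {p : ℕ → Bool} {x : ℕ} (hp : p x = true) :
    ∀ (K : ℕ) (l : List ℕ), x ∈ l.take K → x ∈ (l.filter p).take K := by
  intro K l
  induction l generalizing K with
  | nil => simp
  | cons a t ih =>
    intro hx
    cases K with
    | zero => simp at hx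
    | succ K =>
      rw [List.take_succ_cons] at hx
      rcases List.mem_cons.mp hx with rfl | hx
      · rw [List.filter_cons_of_pos hp, List.take_succ_cons]
        exact List.mem_cons_self
      · have h2 := ih K hx
        by_cases hpa : p a = true
        · rw [List.filter_cons_of_pos hpa, List.take_succ_cons]
          exact List.mem_cons_of_mem _ h2
        · rw [List.filter_cons_of_neg (by simp [hpa])]
          exact mem_take_mono (Nat.le_succ K) h2

private lemma countP_eq_le_one {a : ℕ} : ∀ {L : List ℕ}, L.Nodup →
    L.countP (fun i => decide (i = a)) ≤ 1 := by
  intro L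
  induction L with
  | nil => simp
  | cons b t ih =>
    intro hL
    obtain ⟨hb, ht⟩ := List.nodup_cons.mp hL
    rw [List.countP_cons]
    by_cases hba : b = a
    · subst hba
      have h0 : t.countP (fun i => decide (i = b)) = 0 := by
        rw [List.countP_eq_zero]
        intro i hi
        simp only [decide_eq_true_eq]
        rintro rfl; exact hb hi
      simp [h0]
    · simp only [hba, decide_false, if_false, Nat.add_zero]
      exact ih ht

def _root_.List.enum {α : Type} (l : List α) : List (ℕ × α) := (List.range l.length).zip l

theorem _root_.List.enum_map_fst {α : Type} (l : List α) :
    l.enum.map Prod.fst = List.range l.length :=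
  List.map_fst_zip (by simp)

theorem _root_.List.enum_map_snd {α : Type} (l : List α) : l.enum.map Prod.snd = l :=
  List.map_snd_zip (by simp)

theorem _root_.List.mem_enum {α : Type} {l : List α} {i : ℕ} {v : α} (h : (i, v) ∈ l.enum) :
    ∃ h : i < l.length, l[i] = v := by
  unfold List.enum at h
  obtain ⟨j, hj, he⟩ := List.mem_iff_getElem.mp h
  simp only [List.getElem_zip, List.getElem_range, Prod.mk.injEq] at he
  obtain ⟨rfl, rfl⟩ := he
  simp at hj
  exact ⟨by omega, rfl⟩

private lemma countP_fst_enum_le_one {α : Type} (l : List α) (i0 : ℕ) :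
    l.enum.countP (fun x => decide (x.1 = i0)) ≤ 1 := by
  have h1 : l.enum.countP (fun x => decide (x.1 = i0))
      = (l.enum.map Prod.fst).countP (fun i => decide (i = i0)) := by
    rw [List.countP_map]; rfl
  rw [h1, List.enum_map_fst]
  exact countP_eq_le_one List.nodup_range

private lemma enum_mem {α : Type} {l : List α} {i : ℕ} {v : α} (h : (i, v) ∈ l.enum) :
    i < l.length ∧ v ∈ l := by
  obtain ⟨h1, h2⟩ := List.mem_enum h
  exact ⟨h1, h2 ▸ List.getElem_mem h1⟩

private def blockL (K M i : ℕ) : List ℕ := (List.range K).map (fun t => K*i + t + M)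
private def restL (K M n i : ℕ) : List ℕ :=
  ((List.range (K*n)).filter (fun j => decide ¬(K*i ≤ j ∧ j < K*i + K))).map (fun j => j + M)
private def allYL (K M n : ℕ) : List ℕ := (List.range (K*n)).map (fun j => j + M)

private lemma mem_blockL {K M i c : ℕ} : c ∈ blockL K M i ↔ ∃ t, t < K ∧ K*i + t + M = c := by
  simp [blockL]

private lemma mem_restL {K M n i c : ℕ} :
    c ∈ restL K M n i ↔ ∃ j, (j < K*n ∧ ¬(K*i ≤ j ∧ j < K*i + K)) ∧ j + M = c := by
  simp only [restL, List.mem_map, List.mem_filter, List.mem_range, decide_eq_true_eq]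

private lemma mem_allYL {K M n c : ℕ} : c ∈ allYL K M n ↔ ∃ j, j < K*n ∧ j + M = c := by
  simp [allYL]

private lemma blockL_length (K M i : ℕ) : (blockL K M i).length = K := by simp [blockL]

private lemma allYL_nodup (K M n : ℕ) : (allYL K M n).Nodup :=
  List.nodup_range.map (fun a b h => by omega)

private lemma blockRest_nodup (K M n i : ℕ) : (blockL K M i ++ restL K M n i).Nodup := by
  rw [List.nodup_append]
  refine ⟨List.nodup_range.map (fun a b h => by omega),
    (List.nodup_range.filter _).map (fun a b h => by omega), ?_⟩
  intro a ha b ha' hab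
  obtain ⟨t, ht, rfl⟩ := mem_blockL.mp ha
  obtain ⟨j, ⟨hj1, hj2⟩, hj3⟩ := mem_restL.mp ha'
  omega

private lemma blockRest_mem_iff {K M n i : ℕ} (hi : i < n) {c : ℕ} :
    c ∈ blockL K M i ++ restL K M n i ↔ c ∈ allYL K M n := by
  rw [List.mem_append, mem_blockL, mem_restL, mem_allYL]
  constructor
  · rintro (⟨t, ht, rfl⟩ | ⟨j, ⟨hj1, _⟩, rfl⟩)
    · refine ⟨K*i + t, ?_, rfl⟩
      have h1 : K*(i+1) ≤ K*n := Nat.mul_le_mul (le_refl K) hi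
      rw [Nat.mul_succ] at h1
      omega
    · exact ⟨j, hj1, rfl⟩
  · rintro ⟨j, hj, rfl⟩
    by_cases hcase : K*i ≤ j ∧ j < K*i + K
    · exact Or.inl ⟨j - K*i, by omega, by omega⟩
    · exact Or.inr ⟨j, ⟨hj, hcase⟩, rfl⟩

private lemma take_blockRest (K M n i : ℕ) :
    List.take K (blockL K M i ++ restL K M n i) = blockL K M i := by
  rw [List.take_append_of_le_length (le_of_eq (blockL_length K M i).symm)]
  exact List.take_of_length_le (le_of_eq (blockL_length K M i))

private def extVote (K M n xstar : ℕ) (iv : ℕ × List ℕ) : List ℕ :=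
  if xstar ∈ iv.2.take K then iv.2 ++ allYL K M n
  else (blockL K M iv.1 ++ restL K M n iv.1) ++ iv.2

/-- For `K`-approval with an unbounded number of new candidates, `xstar` is a possible
cowinner iff at least one vote ranks it within the top `K` positions. -/
theorem stmt_8 (K : ℕ) (hK : 1 ≤ K) (X : Finset ℕ) (P : Profile) (hP : IsProfile X P)
    (hne : P ≠ []) (xstar : ℕ) (hx : xstar ∈ X) :
    (∃ k, ∃ Y : Finset ℕ, Disjoint X Y ∧ Y.card = k ∧
      ∃ P', IsProfile (X ∪ Y) P' ∧ Extends X P' P ∧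
        ∀ z ∈ X ∪ Y, approval K P' z ≤ approval K P' xstar) ↔
      1 ≤ approval K P xstar := by
  constructor
  · rintro ⟨k, Y, hdisj, hcard, P', hP', hext, hwin⟩
    have hlenP : P'.length = P.length := by
      have h0 : (restrict X P').length = P.length := by rw [hext]
      simpa [restrict] using h0
    have hP'ne : P' ≠ [] := by
      intro h
      apply hne
      have h0 : P.length = 0 := by rw [← hlenP, h, List.length_nil]
      exact List.length_eq_zero_iff.mp h0
    obtain ⟨w, Q, rfl⟩ := List.exists_cons_of_ne_nil hP'ne
    have hw : w ∈ w :: Q := List.mem_cons_self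
    obtain ⟨hwnd, hwmem⟩ := hP' w hw
    have hwne : w ≠ [] := by
      intro h
      have h0 := (hwmem xstar).mpr (Finset.mem_union_left _ hx)
      rw [h] at h0; simp at h0
    obtain ⟨c, t, rfl⟩ := List.exists_cons_of_ne_nil hwne
    obtain ⟨K', rfl⟩ : ∃ K', K = K' + 1 := ⟨K - 1, by omega⟩
    have hcmem : c ∈ (c :: t).take (K' + 1) := by
      rw [List.take_succ_cons]; exact List.mem_cons_self
    have hcXY : c ∈ X ∪ Y := (hwmem c).mp (List.mem_cons_self)
    have h1 : 1 ≤ approval (K' + 1) ((c :: t) :: Q) c := by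
      unfold approval
      exact List.countP_pos_iff.mpr ⟨c :: t, hw, by simpa using hcmem⟩
    have h2 : 1 ≤ approval (K' + 1) ((c :: t) :: Q) xstar := le_trans h1 (hwin c hcXY)
    unfold approval at h2
    obtain ⟨v', hv'mem, hv'⟩ := List.countP_pos_iff.mp h2
    have hvP : v'.filter (fun c => decide (c ∈ X)) ∈ P := by
      rw [← hext]; exact List.mem_map_of_mem hv'mem
    unfold approval
    refine List.countP_pos_iff.mpr ⟨_, hvP, ?_⟩
    simp only [decide_eq_true_eq] at hv' ⊢
    exact mem_take_filter (by simp [hx]) (K' + 1) v' hv'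
  · intro hs
    have hlenv : ∀ v ∈ P, v.length = X.card := by
      intro v hv
      obtain ⟨hnd, hm⟩ := hP v hv
      have hfeq : v.toFinset = X := Finset.ext (fun a => by
        simpa using hm a)
      calc v.length = v.toFinset.card := (List.toFinset_card_of_nodup hnd).symm
        _ = X.card := by rw [hfeq]
    by_cases hXK : X.card ≤ K
    · refine ⟨0, ∅, Finset.disjoint_empty_right _, Finset.card_empty, P, ?_, ?_, ?_⟩
      · simpa using hP
      · unfold Extends restrict
        have h0 : ∀ v ∈ P, v.filter (fun c => decide (c ∈ X)) = v := fun v hv =>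
          List.filter_eq_self.mpr (fun a ha => by simp [((hP v hv).2 a).mp ha])
        calc P.map (fun v => v.filter (fun c => decide (c ∈ X)))
            = P.map id := List.map_congr_left h0
          _ = P := List.map_id P
      · intro z hz
        unfold approval
        refine List.countP_mono_left (fun v hv _ => ?_)
        have hlen : v.length ≤ K := by rw [hlenv v hv]; exact hXK
        rw [List.take_of_length_le hlen]
        simp [((hP v hv).2 xstar).mpr hx]
    · push_neg at hXK
      set n := P.length with hn
      set M := X.sup id + 1 with hM
      have hgX : ∀ j : ℕ, j + M ∉ X := by
        intro j hj
        have h0 := Finset.le_sup (f := id) hj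
        simp only [id] at h0; omega
      have hKlen : ∀ v ∈ P, K ≤ v.length := fun v hv => by rw [hlenv v hv]; omega
      -- per-vote take computations
      have htake : ∀ iv ∈ P.enum,
          (extVote K M n xstar iv).take K =
            (if xstar ∈ iv.2.take K then iv.2.take K else blockL K M iv.1) := by
        rintro ⟨i, v⟩ hiv
        obtain ⟨hi, hv⟩ := enum_mem hiv
        unfold extVote
        by_cases hgood : xstar ∈ v.take K
        · rw [if_pos hgood, if_pos hgood]
          exact List.take_append_of_le_length (hKlen v hv)
        · rw [if_neg hgood, if_neg hgood]
          rw [List.take_append_of_le_length (by rw [List.length_append, blockL_length]; omega)]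
          exact take_blockRest K M n i
      have hblocknotX : ∀ i c, c ∈ blockL K M i → c ∉ X := by
        intro i c hc
        obtain ⟨t, ht, rfl⟩ := mem_blockL.mp hc
        exact hgX _
      set P₂ : Profile := P.enum.map (extVote K M n xstar) with hP₂
      have hstar : approval K P₂ xstar = approval K P xstar := by
        unfold approval
        rw [hP₂, List.countP_map]
        have h1 : List.countP ((fun v => decide (xstar ∈ v.take K)) ∘ extVote K M n xstar) P.enum
            = List.countP (fun iv : ℕ × List ℕ => decide (xstar ∈ iv.2.take K)) P.enum := by
          refine List.countP_congr (fun iv hiv => ?_)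
          simp only [Function.comp_apply, decide_eq_true_eq]
          rw [htake iv hiv]
          by_cases hgood : xstar ∈ iv.2.take K
          · rw [if_pos hgood]
          · rw [if_neg hgood]
            constructor
            · intro h0; exact absurd hx (hblocknotX _ _ h0)
            · intro h0; exact absurd h0 hgood
        rw [h1]
        have h2 : List.countP (fun iv : ℕ × List ℕ => decide (xstar ∈ iv.2.take K)) P.enum
            = List.countP (fun v => decide (xstar ∈ v.take K)) (P.enum.map Prod.snd) := by
          rw [List.countP_map]; rfl
        rw [h2, List.enum_map_snd]
      refine ⟨K*n, (Finset.range (K*n)).image (fun j => j + M), ?_, ?_, P₂, ?_, ?_, ?_⟩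
      · rw [Finset.disjoint_right]
        intro a ha haX
        obtain ⟨j, _, rfl⟩ := Finset.mem_image.mp ha
        exact hgX j haX
      · rw [Finset.card_image_of_injective _ (fun a b h => by omega), Finset.card_range]
      · -- IsProfile
        intro w hw
        rw [hP₂] at hw
        obtain ⟨⟨i, v⟩, hiv, rfl⟩ := List.mem_map.mp hw
        obtain ⟨hi, hv⟩ := enum_mem hiv
        obtain ⟨hvnd, hvm⟩ := hP v hv
        have hvX : ∀ a ∈ v, a ∈ X := fun a ha => (hvm a).mp ha
        have hmemXY : ∀ c2 : ℕ, (c2 ∈ X ∪ (Finset.range (K*n)).image (fun j => j + M)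
            ↔ c2 ∈ X ∨ ∃ j, j < K*n ∧ j + M = c2) := by
          intro c2
          simp [Finset.mem_union, Finset.mem_image]
        have hvdisjY : ∀ a ∈ v, a ∉ allYL K M n := by
          intro a ha ha'
          obtain ⟨j, hj, rfl⟩ := mem_allYL.mp ha'
          exact hgX j (hvX _ ha)
        unfold extVote
        by_cases hgood : xstar ∈ v.take K
        · rw [if_pos hgood]
          constructor
          · rw [List.nodup_append]
            exact ⟨hvnd, allYL_nodup K M n, fun a ha b hb hab => hvdisjY a ha (hab ▸ hb)⟩
          · intro c2
            rw [List.mem_append, hmemXY, mem_allYL, hvm c2]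
        · rw [if_neg hgood]
          constructor
          · rw [List.nodup_append]
            refine ⟨blockRest_nodup K M n i, hvnd, ?_⟩
            intro a ha b ha' hab
            have h0 : a ∈ allYL K M n := (blockRest_mem_iff hi).mp ha
            exact hvdisjY b ha' (hab ▸ h0)
          · intro c2
            rw [List.mem_append, blockRest_mem_iff hi, hmemXY, mem_allYL, hvm c2]
            exact or_comm
      · -- Extends
        unfold Extends restrict
        rw [hP₂, List.map_map]
        have hfilY : (allYL K M n).filter (fun c => decide (c ∈ X)) = [] := by
          rw [List.filter_eq_nil_iff]
          intro a ha
          obtain ⟨j, hj, rfl⟩ := mem_allYL.mp ha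
          simp [hgX j]
        have h0 : ∀ iv ∈ P.enum,
            ((fun v => v.filter (fun c => decide (c ∈ X))) ∘ extVote K M n xstar) iv
              = Prod.snd iv := by
          rintro ⟨i, v⟩ hiv
          obtain ⟨hi, hv⟩ := enum_mem hiv
          have hvX : ∀ a ∈ v, a ∈ X := fun a ha => ((hP v hv).2 a).mp ha
          have hfilv : v.filter (fun c => decide (c ∈ X)) = v :=
            List.filter_eq_self.mpr (fun a ha => by simp [hvX a ha])
          have hfilBR : (blockL K M i ++ restL K M n i).filter (fun c => decide (c ∈ X)) = [] := by
            rw [List.filter_eq_nil_iff]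
            intro a ha
            obtain ⟨j, hj, rfl⟩ := mem_allYL.mp ((blockRest_mem_iff hi).mp ha)
            simp [hgX j]
          simp only [Function.comp_apply]
          unfold extVote
          by_cases hgood : xstar ∈ v.take K
          · rw [if_pos hgood, List.filter_append, hfilv, hfilY, List.append_nil]
          · rw [if_neg hgood, List.filter_append, hfilv, hfilBR, List.nil_append]
        calc P.enum.map ((fun v => v.filter (fun c => decide (c ∈ X))) ∘ extVote K M n xstar)
            = P.enum.map Prod.snd := List.map_congr_left h0
          _ = P := List.enum_map_snd P
      · -- scores
        intro z hz
        rw [hstar]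
        rcases Finset.mem_union.mp hz with hzX | hzY
        · unfold approval
          rw [hP₂, List.countP_map]
          have h1 : List.countP ((fun v => decide (z ∈ v.take K)) ∘ extVote K M n xstar) P.enum
              ≤ List.countP (fun iv : ℕ × List ℕ => decide (xstar ∈ iv.2.take K)) P.enum := by
            refine List.countP_mono_left (fun iv hiv h0 => ?_)
            simp only [Function.comp_apply, decide_eq_true_eq] at h0 ⊢
            rw [htake iv hiv] at h0
            by_cases hgood : xstar ∈ iv.2.take K
            · exact hgood
            · rw [if_neg hgood] at h0
              exact absurd hzX (hblocknotX _ _ h0)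
          refine le_trans h1 (le_of_eq ?_)
          have h2 : List.countP (fun iv : ℕ × List ℕ => decide (xstar ∈ iv.2.take K)) P.enum
              = List.countP (fun v => decide (xstar ∈ v.take K)) (P.enum.map Prod.snd) := by
            rw [List.countP_map]; rfl
          rw [h2, List.enum_map_snd]
        · obtain ⟨j0, hj0, rfl⟩ := Finset.mem_image.mp hzY
          rw [Finset.mem_range] at hj0
          have hle1 : approval K P₂ (j0 + M) ≤ 1 := by
            unfold approval
            rw [hP₂, List.countP_map]
            refine le_trans (List.countP_mono_left (p := _)
              (q := fun iv : ℕ × List ℕ => decide (iv.1 = j0 / K)) ?_)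
              (countP_fst_enum_le_one P (j0 / K))
            rintro ⟨i, v⟩ hiv h0
            obtain ⟨hi, hv⟩ := enum_mem hiv
            simp only [Function.comp_apply, decide_eq_true_eq] at h0 ⊢
            show i = j0 / K
            rw [htake ⟨i, v⟩ hiv] at h0
            by_cases hgood : xstar ∈ v.take K
            · rw [if_pos hgood] at h0
              have h3 : j0 + M ∈ v := List.take_subset _ _ h0
              exact absurd (((hP v hv).2 _).mp h3) (hgX j0)
            · rw [if_neg hgood] at h0
              obtain ⟨t, ht, h4⟩ := mem_blockL.mp h0
              have h4' : K*i + t + M = j0 + M := h4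
              have h5 : j0 = K*i + t := by omega
              rw [h5, Nat.mul_add_div (by omega), Nat.div_eq_of_lt ht]
              omega
          exact le_trans hle1 hs

end PcWNC
end

section
/- For plurality, if the inequality k · ntop(P, x*) ≥ Σ_{x ∈ X} max(0, ntop(P,x) − ntop(P,x*)) fails, then in every extension P' of P by k new candidates y_1,...,y_k in which every x ∈ X has ntop(P',x) ≤ ntop(P',x*), some new candidate y_j satisfies ntop(P', y_j) > ntop(P', x*); hence x* is not a plurality cowinner in any extension. -/
namespace PcWNC

lemma sum_ntop (S : Finset ℕ) (P : Profile)
    (h : ∀ v ∈ P, ∃ c ∈ S, v.head? = some c) :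
    ∑ c ∈ S, ntop P c = P.length := by
  induction P with
  | nil => simp [ntop]
  | cons v P ih =>
    obtain ⟨c0, hc0S, hc0⟩ := h v (by simp)
    have ihP := ih (fun w hw => h w (by simp [hw]))
    simp only [ntop, List.countP_cons] at *
    rw [Finset.sum_add_distrib, ihP]
    have hone : ∑ c ∈ S, (if decide (v.head? = some c) = true then 1 else 0) = 1 := by
      rw [Finset.sum_eq_single c0]
      · simp [hc0]
      · intro b hb hne
        simp only [hc0, decide_eq_true_eq, Option.some.injEq, ite_eq_right_iff]
        intro hcb; exact absurd hcb.symm hne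
      · intro h'; exact absurd hc0S h'
    rw [hone]
    simp [Nat.add_comm]

lemma ntop_restrict_le (X : Finset ℕ) (P' : Profile) (x : ℕ) (hx : x ∈ X) :
    ntop P' x ≤ ntop (restrict X P') x := by
  unfold ntop restrict
  rw [List.countP_map]
  apply List.countP_mono_left
  intro v _ hv
  simp only [Function.comp, decide_eq_true_eq] at *
  cases v with
  | nil => simp at hv
  | cons a t =>
    simp only [List.head?_cons, Option.some.injEq] at hv
    subst hv
    simp [List.filter_cons, hx]

/-- Plurality, necessity direction: if the characterizing inequality fails, then in any
extension where all initial candidates are beaten by `xstar`, some new candidate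
beats `xstar`. -/
theorem stmt_11 (X : Finset ℕ) (P : Profile) (hP : IsProfile X P)
    (xstar : ℕ) (hx : xstar ∈ X) (k : ℕ)
    (hfail : k * ntop P xstar < ∑ x ∈ X, (ntop P x - ntop P xstar))
    (Y : Finset ℕ) (hXY : Disjoint X Y) (hcard : Y.card = k)
    (P' : Profile) (hP' : IsProfile (X ∪ Y) P') (hext : Extends X P' P)
    (hall : ∀ x ∈ X, ntop P' x ≤ ntop P' xstar) :
    ∃ y ∈ Y, ntop P' xstar < ntop P' y := by
  by_contra hcon
  push_neg at hcon
  have hlen : P.length = P'.length := by rw [← hext]; simp [restrict]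
  have hA : ∀ x ∈ X, ntop P' x ≤ ntop P x := by
    intro x hxX
    rw [← hext]; exact ntop_restrict_le X P' x hxX
  have hxs : ntop P' xstar ≤ ntop P xstar := hA xstar hx
  have hsumP : ∑ x ∈ X, ntop P x = P.length := by
    apply sum_ntop
    intro v hv
    obtain ⟨hnd, hmem⟩ := hP v hv
    cases v with
    | nil =>
      have := (hmem xstar).2 hx
      simp at this
    | cons a t => exact ⟨a, (hmem a).1 (by simp), rfl⟩
  have hsumP' : ∑ c ∈ X ∪ Y, ntop P' c = P'.length := by
    apply sum_ntop
    intro v hv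
    obtain ⟨hnd, hmem⟩ := hP' v hv
    cases v with
    | nil =>
      have := (hmem xstar).2 (Finset.mem_union_left _ hx)
      simp at this
    | cons a t => exact ⟨a, (hmem a).1 (by simp), rfl⟩
  rw [Finset.sum_union hXY] at hsumP'
  have h1 : ∑ x ∈ X, (ntop P x - ntop P xstar) ≤ ∑ x ∈ X, (ntop P x - ntop P' x) :=
    Finset.sum_le_sum (fun x hxX => Nat.sub_le_sub_left ((hall x hxX).trans hxs) _)
  have h2 : ∑ x ∈ X, (ntop P x - ntop P' x)
      = ∑ x ∈ X, ntop P x - ∑ x ∈ X, ntop P' x :=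
    Finset.sum_tsub_distrib X hA
  have h3 : ∑ y ∈ Y, ntop P' y ≤ k * ntop P xstar := by
    calc ∑ y ∈ Y, ntop P' y ≤ ∑ y ∈ Y, ntop P' xstar :=
          Finset.sum_le_sum (fun y hy => hcon y hy)
      _ = k * ntop P' xstar := by rw [Finset.sum_const, hcard, smul_eq_mul]
      _ ≤ k * ntop P xstar := Nat.mul_le_mul_left k hxs
  have hfin : ∑ x ∈ X, (ntop P x - ntop P xstar) ≤ k * ntop P xstar := by
    refine h1.trans ?_
    rw [h2]
    omega
  exact absurd hfail (Nat.not_lt.2 hfin)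
end PcWNC
end
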